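/- arXiv:2402.17089 — 5 statements merged into one kernel-verified Lean document; each statement's English description precedes it below -/
import Mathlib

section
/- Let Φ : ℝ^W → ℝ^d be differentiable with Lipschitz-continuous differential, and for a target f ∈ ℝ^d define the loss L_f(w) = (1/2)‖f − Φ(w)‖². Then the gradient flow w'(t) = −∇L_f(w(t)), w(0) = 0, has a solution defined for all t ≥ 0; in particular, any solution satisfies ‖w(t)‖² ≤ L_f(0)·t for all t ≥ 0, so it cannot blow up in finite time. -/
open MeasureTheory Filter Topology Set

/-- The square loss `L_f(w) = (1/2)‖f - Φ(w)‖²`. -/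
noncomputable def loss {W d : ℕ} (Φ : EuclideanSpace ℝ (Fin W) → EuclideanSpace ℝ (Fin d))
    (f : EuclideanSpace ℝ (Fin d)) (w : EuclideanSpace ℝ (Fin W)) : ℝ :=
  (1 / 2) * ‖f - Φ w‖ ^ 2

section ProjBall

variable {E : Type*} [NormedAddCommGroup E] [NormedSpace ℝ E]

/-- Retraction of a normed space onto the closed ball of radius `R`. -/
noncomputable def projBall (R : ℝ) (x : E) : E :=
  if ‖x‖ ≤ R then x else (R / ‖x‖) • x

lemma projBall_of_le {R : ℝ} {x : E} (h : ‖x‖ ≤ R) : projBall R x = x := if_pos h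

lemma projBall_mem {R : ℝ} (hR : 0 ≤ R) (x : E) :
    projBall R x ∈ Metric.closedBall (0 : E) R := by
  rw [Metric.mem_closedBall, dist_zero_right]
  unfold projBall
  split_ifs with h
  · exact h
  · push_neg at h
    have hx : 0 < ‖x‖ := lt_of_le_of_lt hR h
    rw [norm_smul, Real.norm_eq_abs, abs_of_nonneg (by positivity), div_mul_cancel₀ _ hx.ne']

lemma projBall_lip_aux {R : ℝ} (hR : 0 ≤ R) {x y : E} (hx : ‖x‖ ≤ R) (hy : R < ‖y‖) :
    ‖projBall R x - projBall R y‖ ≤ 2 * ‖x - y‖ := by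
  have hy0 : 0 < ‖y‖ := lt_of_le_of_lt hR hy
  rw [projBall_of_le hx, projBall, if_neg (not_le.2 hy)]
  have hsplit : x - (R / ‖y‖) • y = (x - y) + (y - (R / ‖y‖) • y) := by abel
  have h2 : y - (R / ‖y‖) • y = (1 - R / ‖y‖) • y := by
    rw [sub_smul, one_smul]
  have h3 : ‖y - (R / ‖y‖) • y‖ = ‖y‖ - R := by
    rw [h2, norm_smul, Real.norm_eq_abs, abs_of_nonneg (by
      have : R / ‖y‖ ≤ 1 := (div_le_one hy0).2 hy.le
      linarith)]
    field_simp
  have h4 : ‖y‖ - ‖x‖ ≤ ‖x - y‖ := by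
    have := norm_sub_norm_le y x
    rwa [norm_sub_rev y x] at this
  calc ‖x - (R / ‖y‖) • y‖ ≤ ‖x - y‖ + ‖y - (R / ‖y‖) • y‖ := by
        rw [hsplit]; exact norm_add_le _ _
    _ = ‖x - y‖ + (‖y‖ - R) := by rw [h3]
    _ ≤ ‖x - y‖ + (‖y‖ - ‖x‖) := by linarith
    _ ≤ 2 * ‖x - y‖ := by linarith

lemma projBall_lip {R : ℝ} (hR : 0 ≤ R) (x y : E) :
    ‖projBall R x - projBall R y‖ ≤ 2 * ‖x - y‖ := by
  by_cases hx : ‖x‖ ≤ R <;> by_cases hy : ‖y‖ ≤ R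
  · rw [projBall_of_le hx, projBall_of_le hy]
    have := norm_nonneg (x - y); linarith
  · exact projBall_lip_aux hR hx (not_le.1 hy)
  · rw [norm_sub_rev, norm_sub_rev x y]
    exact projBall_lip_aux hR hy (not_le.1 hx)
  · push_neg at hx hy
    have hx0 : 0 < ‖x‖ := lt_of_le_of_lt hR hx
    have hy0 : 0 < ‖y‖ := lt_of_le_of_lt hR hy
    rw [projBall, if_neg (not_le.2 hx), projBall, if_neg (not_le.2 hy)]
    have hsplit : (R / ‖x‖) • x - (R / ‖y‖) • y
        = (R / ‖x‖) • (x - y) + (R / ‖x‖ - R / ‖y‖) • y := by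
      rw [smul_sub, sub_smul]; abel
    have h1 : ‖(R / ‖x‖) • (x - y)‖ ≤ ‖x - y‖ := by
      rw [norm_smul, Real.norm_eq_abs, abs_of_nonneg (by positivity)]
      have : R / ‖x‖ ≤ 1 := (div_le_one hx0).2 hx.le
      nlinarith [norm_nonneg (x - y)]
    have habs : |‖y‖ - ‖x‖| ≤ ‖x - y‖ := by
      rw [norm_sub_rev]; exact abs_norm_sub_norm_le y x
    have h2 : ‖(R / ‖x‖ - R / ‖y‖) • y‖ ≤ ‖x - y‖ := by
      rw [norm_smul, Real.norm_eq_abs]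
      have heq : R / ‖x‖ - R / ‖y‖ = R * (‖y‖ - ‖x‖) / (‖x‖ * ‖y‖) := by
        field_simp
      rw [heq, abs_div, abs_mul, abs_of_nonneg hR, abs_of_nonneg (by positivity : (0:ℝ) ≤ ‖x‖ * ‖y‖)]
      have step : R * |‖y‖ - ‖x‖| / (‖x‖ * ‖y‖) * ‖y‖ = R * |‖y‖ - ‖x‖| / ‖x‖ := by
        field_simp
      rw [step]
      have hfrac : R / ‖x‖ ≤ 1 := (div_le_one hx0).2 hx.le
      calc R * |‖y‖ - ‖x‖| / ‖x‖ = (R / ‖x‖) * |‖y‖ - ‖x‖| := by ring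
        _ ≤ 1 * |‖y‖ - ‖x‖| := by
            apply mul_le_mul_of_nonneg_right hfrac (abs_nonneg _)
        _ ≤ ‖x - y‖ := by rw [one_mul]; exact habs
    calc ‖(R / ‖x‖) • x - (R / ‖y‖) • y‖
        ≤ ‖(R / ‖x‖) • (x - y)‖ + ‖(R / ‖x‖ - R / ‖y‖) • y‖ := by
          rw [hsplit]; exact norm_add_le _ _
      _ ≤ 2 * ‖x - y‖ := by linarith

end ProjBall

namespace GradFlowAux

variable {W d : ℕ} {Φ : EuclideanSpace ℝ (Fin W) → EuclideanSpace ℝ (Fin d)}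
  {f : EuclideanSpace ℝ (Fin d)}

local notation "E" => EuclideanSpace ℝ (Fin W)
local notation "F" => EuclideanSpace ℝ (Fin d)

lemma loss_nonneg (Φ : EuclideanSpace ℝ (Fin W) → EuclideanSpace ℝ (Fin d)) (f : F) (w : E) :
    0 ≤ loss Φ f w := by
  unfold loss; positivity

lemma hasGradientAt_loss (hΦ : ContDiff ℝ 1 Φ) (x : E) :
    HasGradientAt (loss Φ f)
      (ContinuousLinearMap.adjoint (fderiv ℝ Φ x) (Φ x - f)) x := by
  have hD : HasFDerivAt Φ (fderiv ℝ Φ x) x :=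
    (hΦ.differentiable one_ne_zero x).hasFDerivAt
  have h1 : HasFDerivAt (fun w => f - Φ w) (-(fderiv ℝ Φ x)) x := by
    exact ((hasFDerivAt_const f x).sub hD).congr_fderiv (zero_sub _)
  have h3 := h1.norm_sq.const_mul (1/2 : ℝ)
  rw [hasGradientAt_iff_hasFDerivAt]
  convert h3 using 1
  · rfl
  · rfl
  ext y
  simp only [InnerProductSpace.toDual_apply_apply, ContinuousLinearMap.adjoint_inner_left,
    ContinuousLinearMap.smul_apply, ContinuousLinearMap.comp_apply,
    ContinuousLinearMap.neg_apply, innerSL_apply_apply, smul_eq_mul, inner_neg_right,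
    inner_sub_left, two_smul, ContinuousLinearMap.add_apply]
  ring

lemma gradient_loss (hΦ : ContDiff ℝ 1 Φ) (x : E) :
    gradient (loss Φ f) x = ContinuousLinearMap.adjoint (fderiv ℝ Φ x) (Φ x - f) :=
  (hasGradientAt_loss hΦ x).gradient

lemma contDiff_loss (hΦ : ContDiff ℝ 1 Φ) : ContDiff ℝ 1 (loss Φ f) := by
  unfold loss
  exact contDiff_const.mul ((contDiff_const.sub hΦ).norm_sq ℝ)

lemma continuous_gradient_loss (hΦ : ContDiff ℝ 1 Φ) :
    Continuous (fun x : E => gradient (loss Φ f) x) := by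
  have h1 : Continuous (fderiv ℝ (loss Φ f)) :=
    (contDiff_loss hΦ).continuous_fderiv one_ne_zero
  exact (InnerProductSpace.toDual ℝ E).symm.continuous.comp h1

lemma field_bounds (hΦ : ContDiff ℝ 1 Φ) {K : NNReal}
    (hlip : LipschitzWith K (fderiv ℝ Φ)) (f : F) {R : ℝ} (hR : 0 ≤ R) :
    ∃ (C : ℝ) (ℓ : NNReal), 0 ≤ C ∧
      (∀ x ∈ Metric.closedBall (0 : E) R, ‖gradient (loss Φ f) x‖ ≤ C) ∧
      LipschitzOnWith ℓ (fun x : E => -(gradient (loss Φ f) x))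
        (Metric.closedBall (0 : E) R) := by
  set A := fderiv ℝ Φ with hA
  set M : ℝ := ‖A 0‖ + K * R with hM
  have hM0 : 0 ≤ M := by positivity
  have hAle : ∀ x ∈ Metric.closedBall (0 : E) R, ‖A x‖ ≤ M := by
    intro x hx
    rw [Metric.mem_closedBall, dist_zero_right] at hx
    have h1 : ‖A x - A 0‖ ≤ K * ‖x - 0‖ := by
      have := hlip.dist_le_mul x 0
      rwa [dist_eq_norm, dist_eq_norm] at this
    rw [sub_zero] at h1
    calc ‖A x‖ ≤ ‖A x - A 0‖ + ‖A 0‖ := by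
          simpa using norm_add_le (A x - A 0) (A 0)
      _ ≤ K * ‖x‖ + ‖A 0‖ := by linarith
      _ ≤ M := by
          rw [hM]
          have : (K : ℝ) * ‖x‖ ≤ K * R := by
            apply mul_le_mul_of_nonneg_left hx K.2
          linarith
  have hΦlip : ∀ x ∈ Metric.closedBall (0 : E) R, ∀ y ∈ Metric.closedBall (0 : E) R,
      ‖Φ x - Φ y‖ ≤ M * ‖x - y‖ := by
    intro x hx y hy
    exact (convex_closedBall (0 : E) R).norm_image_sub_le_of_norm_fderiv_le
      (fun z _ => hΦ.differentiable one_ne_zero z) hAle hy hx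
  have h0mem : (0 : E) ∈ Metric.closedBall (0 : E) R := by
    simpa using hR
  have hFle : ∀ x ∈ Metric.closedBall (0 : E) R, ‖f - Φ x‖ ≤ ‖f‖ + ‖Φ 0‖ + M * R := by
    intro x hx
    have hx' : ‖x‖ ≤ R := by rwa [Metric.mem_closedBall, dist_zero_right] at hx
    have h1 : ‖Φ x - Φ 0‖ ≤ M * ‖x - 0‖ := hΦlip x hx 0 h0mem
    rw [sub_zero] at h1
    have h2 : ‖Φ x‖ ≤ ‖Φ x - Φ 0‖ + ‖Φ 0‖ := by
      simpa using norm_add_le (Φ x - Φ 0) (Φ 0)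
    have h3 : M * ‖x‖ ≤ M * R := mul_le_mul_of_nonneg_left hx' hM0
    calc ‖f - Φ x‖ ≤ ‖f‖ + ‖Φ x‖ := norm_sub_le _ _
      _ ≤ ‖f‖ + ‖Φ 0‖ + M * R := by linarith
  set B : ℝ := ‖f‖ + ‖Φ 0‖ + M * R with hB
  have hB0 : 0 ≤ B := le_trans (norm_nonneg _) (hFle 0 h0mem)
  refine ⟨M * B, (K * B + M * M).toNNReal, mul_nonneg hM0 hB0, ?_, ?_⟩
  · intro x hx
    rw [gradient_loss hΦ]
    calc ‖ContinuousLinearMap.adjoint (A x) (Φ x - f)‖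
        ≤ ‖ContinuousLinearMap.adjoint (A x)‖ * ‖Φ x - f‖ :=
          ContinuousLinearMap.le_opNorm _ _
      _ ≤ M * B := by
          rw [LinearIsometryEquiv.norm_map, norm_sub_rev]
          exact mul_le_mul (hAle x hx) (hFle x hx) (norm_nonneg _) hM0
  · apply LipschitzOnWith.of_dist_le_mul
    intro x hx y hy
    rw [dist_eq_norm, dist_eq_norm, Real.coe_toNNReal _ (by positivity)]
    have key : -(gradient (loss Φ f) x) - -(gradient (loss Φ f) y)
        = ContinuousLinearMap.adjoint (A x - A y) (f - Φ x)
          + ContinuousLinearMap.adjoint (A y) (Φ y - Φ x) := by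
      rw [gradient_loss hΦ, gradient_loss hΦ]
      simp only [map_sub, ContinuousLinearMap.sub_apply]
      abel
    rw [key]
    have hAxy : ‖A x - A y‖ ≤ K * ‖x - y‖ := by
      have := hlip.dist_le_mul x y
      rwa [dist_eq_norm, dist_eq_norm] at this
    have t1 : ‖ContinuousLinearMap.adjoint (A x - A y) (f - Φ x)‖ ≤ (K * ‖x - y‖) * B := by
      calc ‖ContinuousLinearMap.adjoint (A x - A y) (f - Φ x)‖
          ≤ ‖ContinuousLinearMap.adjoint (A x - A y)‖ * ‖f - Φ x‖ :=
            ContinuousLinearMap.le_opNorm _ _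
        _ ≤ (K * ‖x - y‖) * B := by
            rw [LinearIsometryEquiv.norm_map]
            exact mul_le_mul hAxy (hFle x hx) (norm_nonneg _) (by positivity)
    have t2 : ‖ContinuousLinearMap.adjoint (A y) (Φ y - Φ x)‖ ≤ M * (M * ‖x - y‖) := by
      calc ‖ContinuousLinearMap.adjoint (A y) (Φ y - Φ x)‖
          ≤ ‖ContinuousLinearMap.adjoint (A y)‖ * ‖Φ y - Φ x‖ :=
            ContinuousLinearMap.le_opNorm _ _
        _ ≤ M * (M * ‖x - y‖) := by
            rw [LinearIsometryEquiv.norm_map]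
            have := hΦlip y hy x hx
            rw [norm_sub_rev y x] at this
            exact mul_le_mul (hAle y hy) this (norm_nonneg _) hM0
    calc ‖ContinuousLinearMap.adjoint (A x - A y) (f - Φ x)
          + ContinuousLinearMap.adjoint (A y) (Φ y - Φ x)‖
        ≤ ‖ContinuousLinearMap.adjoint (A x - A y) (f - Φ x)‖
          + ‖ContinuousLinearMap.adjoint (A y) (Φ y - Φ x)‖ := norm_add_le _ _
      _ ≤ (K * B + M * M) * ‖x - y‖ := by nlinarith [norm_nonneg (x - y)]

lemma energy (hΦ : ContDiff ℝ 1 Φ) {w : ℝ → E} {b : ℝ}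
    (hw0 : w 0 = 0)
    (hw : ∀ s ∈ Icc (0:ℝ) b, HasDerivAt w (-(gradient (loss Φ f) (w s))) s) :
    ∀ t ∈ Icc (0:ℝ) b, ‖w t‖ ^ 2 ≤ loss Φ f 0 * t := by
  intro t ht
  obtain ⟨ht0, htb⟩ := ht
  set L0 := loss Φ f 0 with hL0
  have hL0n : 0 ≤ L0 := loss_nonneg Φ f 0
  set g : ℝ → E := fun s => gradient (loss Φ f) (w s) with hg
  have hwc : ∀ s ∈ Icc (0:ℝ) t, ContinuousAt w s :=
    fun s hs => (hw s ⟨hs.1, hs.2.trans htb⟩).continuousAt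
  have hgc : ContinuousOn g (Icc 0 t) := fun s hs =>
    ((continuous_gradient_loss hΦ (f := f)).continuousAt.comp (hwc s hs)).continuousWithinAt
  -- derivative of the loss along the flow
  have hLd : ∀ s ∈ Icc (0:ℝ) t, HasDerivAt (fun τ => loss Φ f (w τ)) (-(‖g s‖ ^ 2)) s := by
    intro s hs
    have h1 : HasGradientAt (loss Φ f) (g s) (w s) :=
      ((contDiff_loss hΦ (f := f)).differentiable one_ne_zero (w s)).hasGradientAt
    have h2 := h1.hasFDerivAt.comp_hasDerivAt s (hw s ⟨hs.1, hs.2.trans htb⟩)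
    refine h2.congr_deriv ?_
    rw [InnerProductSpace.toDual_apply_apply, inner_neg_right]
    exact congrArg Neg.neg (real_inner_self_eq_norm_sq (g s))
  have hint1 : IntervalIntegrable (fun s => -(‖g s‖ ^ 2)) volume 0 t := by
    apply ContinuousOn.intervalIntegrable
    rw [uIcc_of_le ht0]
    exact ((hgc.norm).pow 2).neg
  have hFTC1 : (∫ s in (0:ℝ)..t, -(‖g s‖ ^ 2)) = loss Φ f (w t) - loss Φ f (w 0) :=
    intervalIntegral.integral_eq_sub_of_hasDerivAt
      (fun s hs => hLd s (by rwa [uIcc_of_le ht0] at hs)) hint1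
  have hI2 : (∫ s in (0:ℝ)..t, ‖g s‖ ^ 2) = L0 - loss Φ f (w t) := by
    rw [intervalIntegral.integral_neg, hw0] at hFTC1
    linarith
  have hI2le : (∫ s in (0:ℝ)..t, ‖g s‖ ^ 2) ≤ L0 := by
    have := loss_nonneg Φ f (w t); linarith
  have hint2 : IntervalIntegrable (fun s => -(g s)) volume 0 t := by
    apply ContinuousOn.intervalIntegrable
    rw [uIcc_of_le ht0]
    exact hgc.neg
  have hFTC2 : (∫ s in (0:ℝ)..t, -(g s)) = w t - w 0 :=
    intervalIntegral.integral_eq_sub_of_hasDerivAt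
      (fun s hs => hw s (by rw [uIcc_of_le ht0] at hs; exact ⟨hs.1, hs.2.trans htb⟩)) hint2
  have hwt : ‖w t‖ ≤ ∫ s in (0:ℝ)..t, ‖g s‖ := by
    have h1 : ‖w t‖ = ‖∫ s in (0:ℝ)..t, -(g s)‖ := by rw [hFTC2, hw0, sub_zero]
    rw [h1]
    calc ‖∫ s in (0:ℝ)..t, -(g s)‖ ≤ ∫ s in (0:ℝ)..t, ‖-(g s)‖ :=
          intervalIntegral.norm_integral_le_integral_norm ht0
      _ = ∫ s in (0:ℝ)..t, ‖g s‖ := by simp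
  -- Cauchy-Schwarz (Hölder) step
  set μ := volume.restrict (Ioc (0:ℝ) t) with hμ
  haveI : IsFiniteMeasure μ := by
    constructor
    rw [hμ, Measure.restrict_apply_univ]
    exact measure_Ioc_lt_top
  have hconj : Real.HolderConjugate 2 2 := Real.HolderConjugate.two_two
  have hgcIoc : ContinuousOn (fun s => ‖g s‖) (Ioc 0 t) := (hgc.mono Ioc_subset_Icc_self).norm
  have hmeas : AEStronglyMeasurable (fun s => ‖g s‖) μ :=
    hgcIoc.aestronglyMeasurable measurableSet_Ioc
  obtain ⟨Cb, hCb⟩ := isCompact_Icc.exists_bound_of_continuousOn hgc.norm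
  have hmem2 : MemLp (fun s => ‖g s‖) (ENNReal.ofReal 2) μ := by
    apply MemLp.of_bound hmeas Cb
    rw [hμ]
    filter_upwards [ae_restrict_mem measurableSet_Ioc] with s hs
    exact hCb s (Ioc_subset_Icc_self hs)
  have hmem1 : MemLp (fun _ : ℝ => (1:ℝ)) (ENNReal.ofReal 2) μ := memLp_const 1
  have holder := MeasureTheory.integral_mul_le_Lp_mul_Lq_of_nonneg hconj
    (f := fun s => ‖g s‖) (g := fun _ => (1:ℝ)) (μ := μ)
    (Filter.Eventually.of_forall fun s => norm_nonneg _)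
    (Filter.Eventually.of_forall fun _ => zero_le_one) hmem2 hmem1
  simp only [mul_one, Real.one_rpow] at holder
  have hconst : (∫ _ : ℝ, (1:ℝ) ∂μ) = t := by
    rw [integral_const, smul_eq_mul, mul_one, hμ, measureReal_def, Measure.restrict_apply_univ,
      Real.volume_Ioc, sub_zero, ENNReal.toReal_ofReal ht0]
  rw [hconst] at holder
  have hrpow2 : (∫ s, ‖g s‖ ^ (2:ℝ) ∂μ) = ∫ s in (0:ℝ)..t, ‖g s‖ ^ 2 := by
    rw [intervalIntegral.integral_of_le ht0]
    congr 1
    ext s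
    rw [show (2:ℝ) = ((2:ℕ):ℝ) by norm_num, Real.rpow_natCast]
  rw [hrpow2] at holder
  have hI1eq : (∫ s, ‖g s‖ ∂μ) = ∫ s in (0:ℝ)..t, ‖g s‖ := by
    rw [intervalIntegral.integral_of_le ht0]
  rw [hI1eq] at holder
  -- collect
  have hI2nn : 0 ≤ ∫ s in (0:ℝ)..t, ‖g s‖ ^ 2 :=
    intervalIntegral.integral_nonneg ht0 fun s _ => by positivity
  have hsq : ‖w t‖ ≤ Real.sqrt (∫ s in (0:ℝ)..t, ‖g s‖ ^ 2) * Real.sqrt t := by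
    calc ‖w t‖ ≤ ∫ s in (0:ℝ)..t, ‖g s‖ := hwt
      _ ≤ (∫ s in (0:ℝ)..t, ‖g s‖ ^ 2) ^ (1/(2:ℝ)) * t ^ (1/(2:ℝ)) := holder
      _ = Real.sqrt (∫ s in (0:ℝ)..t, ‖g s‖ ^ 2) * Real.sqrt t := by
          rw [Real.sqrt_eq_rpow, Real.sqrt_eq_rpow]
  have hfinal : ‖w t‖ ≤ Real.sqrt L0 * Real.sqrt t := by
    refine hsq.trans ?_
    apply mul_le_mul_of_nonneg_right (Real.sqrt_le_sqrt hI2le) (Real.sqrt_nonneg _)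
  calc ‖w t‖ ^ 2 ≤ (Real.sqrt L0 * Real.sqrt t) ^ 2 :=
        pow_le_pow_left₀ (norm_nonneg _) hfinal 2
    _ = L0 * t := by
        rw [mul_pow, Real.sq_sqrt hL0n, Real.sq_sqrt ht0]

lemma uniq (hΦ : ContDiff ℝ 1 Φ) {K : NNReal}
    (hlip : LipschitzWith K (fderiv ℝ Φ)) (f : F) {b : ℝ} {w1 w2 : ℝ → E}
    (h10 : w1 0 = 0) (h20 : w2 0 = 0)
    (h1 : ∀ s ∈ Icc (0:ℝ) b, HasDerivAt w1 (-(gradient (loss Φ f) (w1 s))) s)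
    (h2 : ∀ s ∈ Icc (0:ℝ) b, HasDerivAt w2 (-(gradient (loss Φ f) (w2 s))) s) :
    EqOn w1 w2 (Icc 0 b) := by
  rcases lt_or_ge b 0 with hb | hb
  · intro s hs
    exact absurd (hs.1.trans hs.2) (not_le.2 hb)
  set ρ := Real.sqrt (loss Φ f 0 * b) with hρ
  obtain ⟨C, ℓ, _, _, hlipOn⟩ := field_bounds hΦ hlip f (R := ρ) (Real.sqrt_nonneg _)
  have hmem : ∀ (w : ℝ → E), w 0 = 0 →
      (∀ s ∈ Icc (0:ℝ) b, HasDerivAt w (-(gradient (loss Φ f) (w s))) s) →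
      ∀ s ∈ Ico (0:ℝ) b, w s ∈ Metric.closedBall (0:E) ρ := by
    intro w hw0 hw s hs
    have hE := energy hΦ hw0 hw s (Ico_subset_Icc_self hs)
    rw [Metric.mem_closedBall, dist_zero_right]
    have h2' : ‖w s‖ ^ 2 ≤ loss Φ f 0 * b := by
      refine hE.trans ?_
      exact mul_le_mul_of_nonneg_left hs.2.le (loss_nonneg Φ f 0)
    calc ‖w s‖ = Real.sqrt (‖w s‖ ^ 2) := (Real.sqrt_sq (norm_nonneg _)).symm
      _ ≤ ρ := Real.sqrt_le_sqrt h2'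
  have hc1 : ContinuousOn w1 (Icc 0 b) :=
    fun s hs => (h1 s hs).continuousAt.continuousWithinAt
  have hc2 : ContinuousOn w2 (Icc 0 b) :=
    fun s hs => (h2 s hs).continuousAt.continuousWithinAt
  exact ODE_solution_unique_of_mem_Icc_right
    (v := fun _ x => -(gradient (loss Φ f) x)) (s := fun _ => Metric.closedBall (0:E) ρ)
    (fun _ _ => hlipOn) hc1
    (fun s hs => (h1 s (Ico_subset_Icc_self hs)).hasDerivWithinAt)
    (hmem w1 h10 h1) hc2
    (fun s hs => (h2 s (Ico_subset_Icc_self hs)).hasDerivWithinAt)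
    (hmem w2 h20 h2) (h10.trans h20.symm)

lemma exists_sol (hΦ : ContDiff ℝ 1 Φ) {K : NNReal}
    (hlip : LipschitzWith K (fderiv ℝ Φ)) (f : F) (n : ℕ) :
    ∃ g : ℝ → E, g 0 = 0 ∧
      ∀ t ∈ Icc (0:ℝ) (n:ℝ), HasDerivAt g (-(gradient (loss Φ f) (g t))) t := by
  set L0 := loss Φ f 0 with hL0
  have hL0n : 0 ≤ L0 := loss_nonneg Φ f 0
  set T : ℝ := (n:ℝ) + 1 with hT
  have hT0 : 0 < T := by positivity
  set R : ℝ := Real.sqrt (L0 * T) + 1 with hR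
  have hR1 : 1 ≤ R := by
    have := Real.sqrt_nonneg (L0 * T); linarith
  have hR0 : 0 ≤ R := by linarith
  obtain ⟨C, ℓ, hC0, hCb, hlipOn⟩ := field_bounds hΦ hlip f (R := R) hR0
  set vR : E → E := fun x => -(gradient (loss Φ f) (projBall R x)) with hvR
  have hvRlip : LipschitzWith (2 * ℓ) vR := by
    apply LipschitzWith.of_dist_le_mul
    intro x y
    have h1 := hlipOn.dist_le_mul (projBall R x) (projBall_mem hR0 x)
      (projBall R y) (projBall_mem hR0 y)
    calc dist (vR x) (vR y) ≤ ℓ * dist (projBall R x) (projBall R y) := h1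
      _ ≤ ℓ * (2 * dist x y) := by
          apply mul_le_mul_of_nonneg_left _ ℓ.2
          rw [dist_eq_norm, dist_eq_norm]
          exact projBall_lip hR0 x y
      _ = (2 * ℓ : NNReal) * dist x y := by push_cast; ring
  have hvRb : ∀ x : E, ‖vR x‖ ≤ C := by
    intro x
    rw [hvR]
    simpa using hCb (projBall R x) (projBall_mem hR0 x)
  have hPL : IsPicardLindelof (fun _ : ℝ => vR) (tmin := -T) (tmax := T)
      ⟨0, ⟨by linarith, by linarith⟩⟩ (0:E) (C*T).toNNReal 0 C.toNNReal (2*ℓ) :=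
    { lipschitzOnWith := fun _ _ => hvRlip.lipschitzOnWith
      continuousOn := fun _ _ => continuousOn_const
      norm_le := fun _ _ x _ => by rw [Real.coe_toNNReal _ hC0]; exact hvRb x
      mul_max_le := by
        simp only [Real.coe_toNNReal _ hC0, Real.coe_toNNReal _ (by positivity : 0 ≤ C * T),
          NNReal.coe_zero, sub_zero, zero_sub, neg_neg, max_self]
        exact le_rfl }
  obtain ⟨g, hg0', hgW⟩ := hPL.exists_eq_forall_mem_Icc_hasDerivWithinAt₀
  have hg0 : g 0 = 0 := hg0'
  have hgd : ∀ t ∈ Icc (0:ℝ) (n:ℝ), HasDerivAt g (vR (g t)) t := by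
    intro t ht
    have ht' : t ∈ Icc (-T) T := ⟨by linarith [ht.1], by rw [hT]; linarith [ht.2]⟩
    exact (hgW t ht').hasDerivAt (Icc_mem_nhds (by linarith [ht.1]) (by rw [hT]; linarith [ht.2]))
  have hgc : ∀ s ∈ Icc (0:ℝ) (n:ℝ), ContinuousAt g s := fun s hs => (hgd s hs).continuousAt
  -- the solution stays in the ball of radius R
  have key : ∀ t ∈ Icc (0:ℝ) (n:ℝ), ‖g t‖ ≤ R := by
    by_contra hcon
    push_neg at hcon
    obtain ⟨t₁, ht₁, hgt⟩ := hcon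
    set S := {s ∈ Icc (0:ℝ) (n:ℝ) | R ≤ ‖g s‖} with hS
    have hScl : IsClosed S := by
      have hgcOn : ContinuousOn (fun s => ‖g s‖) (Icc (0:ℝ) (n:ℝ)) :=
        fun s hs => ((hgc s hs).norm).continuousWithinAt
      have : S = Icc (0:ℝ) (n:ℝ) ∩ (fun s => ‖g s‖) ⁻¹' (Ici R) := by
        ext s; simp [hS, Set.mem_sep_iff, and_comm]
      rw [this]
      exact hgcOn.preimage_isClosed_of_isClosed isClosed_Icc isClosed_Ici
    have hSne : S.Nonempty := ⟨t₁, ht₁, hgt.le⟩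
    have hSbd : BddBelow S := ⟨0, fun s hs => hs.1.1⟩
    set τ := sInf S with hτ
    have hτS : τ ∈ S := hScl.csInf_mem hSne hSbd
    obtain ⟨hτmem, hτR⟩ := hτS
    have hτpos : 0 < τ := by
      rcases lt_or_eq_of_le hτmem.1 with h | h
      · exact h
      · exfalso
        rw [← h, hg0, norm_zero] at hτR
        linarith
    have hless : ∀ s ∈ Ico (0:ℝ) τ, ‖g s‖ < R := by
      intro s hs
      by_contra hge
      push_neg at hge
      have hsS : s ∈ S := ⟨⟨hs.1, hs.2.le.trans hτmem.2⟩, hge⟩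
      exact absurd (csInf_le hSbd hsS) (not_le.2 hs.2)
    have hτR' : ‖g τ‖ ≤ R := by
      have hc : ContinuousWithinAt (fun s => ‖g s‖) (Ico 0 τ) τ :=
        ((hgc τ hτmem).norm).continuousWithinAt
      haveI hne : (𝓝[Ico (0:ℝ) τ] τ).NeBot := by
        rw [← mem_closure_iff_nhdsWithin_neBot, closure_Ico hτpos.ne]
        exact ⟨hτpos.le, le_rfl⟩
      exact le_of_tendsto hc
        (eventually_nhdsWithin_of_forall (fun s hs => (hless s hs).le))
    have hball : ∀ s ∈ Icc (0:ℝ) τ, ‖g s‖ ≤ R := by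
      intro s hs
      rcases lt_or_eq_of_le hs.2 with h | h
      · exact (hless s ⟨hs.1, h⟩).le
      · rw [h]; exact hτR'
    have htrue : ∀ s ∈ Icc (0:ℝ) τ, HasDerivAt g (-(gradient (loss Φ f) (g s))) s := by
      intro s hs
      have h : HasDerivAt g (-(gradient (loss Φ f) (projBall R (g s)))) s :=
        hgd s ⟨hs.1, hs.2.trans hτmem.2⟩
      rwa [projBall_of_le (hball s hs)] at h
    have hE := energy hΦ hg0 htrue τ ⟨le_refl 0 |>.trans hτpos.le, le_refl τ⟩
    have h1 : R ^ 2 ≤ ‖g τ‖ ^ 2 := pow_le_pow_left₀ hR0 hτR 2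
    have h2 : L0 * τ ≤ L0 * T := by
      apply mul_le_mul_of_nonneg_left _ hL0n
      rw [hT]; linarith [hτmem.2]
    have h3 : Real.sqrt (L0 * T) ^ 2 = L0 * T := Real.sq_sqrt (by positivity)
    have hReq : R = Real.sqrt (L0 * T) + 1 := hR
    nlinarith [Real.sqrt_nonneg (L0 * T)]
  refine ⟨g, hg0, fun t ht => ?_⟩
  have h : HasDerivAt g (-(gradient (loss Φ f) (projBall R (g t)))) t := hgd t ht
  rwa [projBall_of_le (key t ht)] at h

end GradFlowAux

/-- Global existence of gradient flow, and the a priori bound `‖w(t)‖² ≤ L_f(0)·t`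
ruling out finite-time blow-up. -/
theorem global_existence_of_gradient_flow (W d : ℕ) (hW : 0 < W) (hd : 0 < d)
    (Φ : EuclideanSpace ℝ (Fin W) → EuclideanSpace ℝ (Fin d))
    (hΦ : ContDiff ℝ 1 Φ) (K : NNReal) (hlip : LipschitzWith K (fderiv ℝ Φ))
    (f : EuclideanSpace ℝ (Fin d)) :
    (∃ w : ℝ → EuclideanSpace ℝ (Fin W), w 0 = 0 ∧
      ∀ t ≥ (0 : ℝ), HasDerivAt w (-(gradient (loss Φ f) (w t))) t) ∧
    (∀ w : ℝ → EuclideanSpace ℝ (Fin W), w 0 = 0 →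
      (∀ t ≥ (0 : ℝ), HasDerivAt w (-(gradient (loss Φ f) (w t))) t) →
      ∀ t ≥ (0 : ℝ), ‖w t‖ ^ 2 ≤ loss Φ f 0 * t) := by
  constructor
  · -- global existence
    choose wfam hw0 hwd using fun n : ℕ => GradFlowAux.exists_sol hΦ hlip f n
    set u : ℝ → EuclideanSpace ℝ (Fin W) :=
      fun t => if t < 0 then wfam 2 t else wfam (⌊t⌋₊ + 1) t with hu
    have hagree : ∀ m N : ℕ, m ≤ N → EqOn (wfam m) (wfam N) (Icc 0 (m:ℝ)) := by
      intro m N hmN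
      apply GradFlowAux.uniq hΦ hlip f (hw0 m) (hw0 N) (hwd m)
      intro s hs
      exact hwd N s ⟨hs.1, hs.2.trans (by exact_mod_cast hmN)⟩
    have hu0 : u 0 = 0 := by
      rw [hu]
      simp only [lt_irrefl, if_false, Nat.floor_zero]
      exact hw0 1
    refine ⟨u, hu0, fun t ht => ?_⟩
    set N := ⌊t⌋₊ + 2 with hN
    have htfl : t < (⌊t⌋₊ : ℝ) + 1 := Nat.lt_floor_add_one t
    have htN : t ∈ Icc (0:ℝ) (N:ℝ) := ⟨ht, by rw [hN]; push_cast; linarith⟩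
    have hev : u =ᶠ[𝓝 t] wfam N := by
      have hmem : Ioo (t-1) (t+1) ∈ 𝓝 t := Ioo_mem_nhds (by linarith) (by linarith)
      filter_upwards [hmem] with s hs
      rcases lt_or_ge s 0 with hs0 | hs0
      · have h1 : u s = wfam 2 s := if_pos hs0
        have ht1 : t < 1 := by linarith [hs.1]
        have h2 : ⌊t⌋₊ = 0 := Nat.floor_eq_zero.2 ht1
        rw [h1, hN, h2]
      · have h1 : u s = wfam (⌊s⌋₊ + 1) s := if_neg (not_lt.2 hs0)
        rw [h1]
        have hsN : s < ((⌊t⌋₊ + 2 : ℕ) : ℝ) := by push_cast; linarith [hs.2]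
        have hfl : ⌊s⌋₊ < ⌊t⌋₊ + 2 := (Nat.floor_lt hs0).2 hsN
        have hm : ⌊s⌋₊ + 1 ≤ N := by rw [hN]; omega
        exact hagree (⌊s⌋₊ + 1) N hm ⟨hs0, by push_cast; linarith [Nat.lt_floor_add_one s]⟩
    have hwN : HasDerivAt (wfam N) (-(gradient (loss Φ f) (wfam N t))) t := hwd N t htN
    have hut : u t = wfam N t := hev.self_of_nhds
    rw [show (-(gradient (loss Φ f) (u t))) = -(gradient (loss Φ f) (wfam N t)) by rw [hut]]
    exact hwN.congr_of_eventuallyEq hev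
  · intro w hw0 hwd t ht
    exact GradFlowAux.energy hΦ hw0 (fun s hs => hwd s hs.1) t ⟨ht, le_rfl⟩
end

section
/- Let 1 ≤ W < d and let Φ : ℝ^W → ℝ^d be a C² map with Φ(0) = 0 whose Jacobian J₀ = DΦ(0) has full rank W. Then the set F_Φ of gradient-flow-learnable targets is not dense in ℝ^d: there exist f₀ ∈ ℝ^d and ε > 0 such that no target in the ball B(f₀, ε) is learnable. -/
open MeasureTheory Filter Topology Set

/-- The set of targets learnable by gradient flow started at `0`. -/
def learnableSet {W d : ℕ} (Φ : EuclideanSpace ℝ (Fin W) → EuclideanSpace ℝ (Fin d)) :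
    Set (EuclideanSpace ℝ (Fin d)) :=
  {f | ∃ w : ℝ → EuclideanSpace ℝ (Fin W), w 0 = 0 ∧
    (∀ t ≥ (0 : ℝ), HasDerivAt w (-(gradient (loss Φ f) (w t))) t) ∧
    (⨅ t : Set.Ici (0 : ℝ), loss Φ f (w t)) = 0}

open scoped RealInnerProductSpace

set_option maxHeartbeats 2000000 in
/-- If `W < d`, `Φ` is `C²`, `Φ(0) = 0` and the Jacobian at `0` has full rank `W`
(i.e. is injective), then the learnable targets are not dense: some ball consists
entirely of non-learnable targets. -/
theorem learnable_not_dense (W d : ℕ) (hW : 1 ≤ W) (hWd : W < d)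
    (Φ : EuclideanSpace ℝ (Fin W) → EuclideanSpace ℝ (Fin d))
    (hΦ : ContDiff ℝ 2 Φ) (hΦ0 : Φ 0 = 0)
    (hrank : Function.Injective (fderiv ℝ Φ 0)) :
    ∃ f₀ : EuclideanSpace ℝ (Fin d), ∃ ε > (0 : ℝ),
      ∀ f ∈ Metric.ball f₀ ε, f ∉ learnableSet Φ := by
  classical
  set J : EuclideanSpace ℝ (Fin W) →L[ℝ] EuclideanSpace ℝ (Fin d) := fderiv ℝ Φ 0 with hJdef
  -- antilipschitz constant c
  obtain ⟨K, hK0, hKa⟩ := (J : EuclideanSpace ℝ (Fin W) →ₗ[ℝ] EuclideanSpace ℝ (Fin d)).exists_antilipschitzWith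
    (LinearMap.ker_eq_bot.mpr (by simpa using hrank))
  set c : ℝ := (K : ℝ)⁻¹ with hcdef
  have hc : 0 < c := by positivity
  have hlow : ∀ x : EuclideanSpace ℝ (Fin W), c * ‖x‖ ≤ ‖J x‖ := by
    intro x
    have h := hKa.le_mul_dist x 0
    simp only [dist_eq_norm, sub_zero, LinearMap.coe_coe, map_zero] at h
    have hK0' : (0:ℝ) < (K:ℝ) := by exact_mod_cast hK0
    rw [hcdef, inv_mul_le_iff₀ hK0']
    exact h
  set M : ℝ := ‖J‖ with hMdef
  have hM0 : 0 ≤ M := norm_nonneg _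
  have hcM : c ≤ M := by
    have he : ‖(EuclideanSpace.single (⟨0, hW⟩ : Fin W) (1:ℝ) : EuclideanSpace ℝ (Fin W))‖ = 1 := by
      rw [EuclideanSpace.norm_single]; norm_num
    have h1 := hlow (EuclideanSpace.single (⟨0, hW⟩ : Fin W) (1:ℝ))
    have h2 := J.le_opNorm (EuclideanSpace.single (⟨0, hW⟩ : Fin W) (1:ℝ))
    rw [he] at h1 h2
    simpa using h1.trans h2
  -- Taylor radius r
  have hdΦ : HasFDerivAt Φ J 0 := by
    rw [hJdef]; exact ((hΦ.differentiable two_ne_zero) 0).hasFDerivAt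
  have hlo := hasFDerivAt_iff_isLittleO_nhds_zero.1 hdΦ
  rw [Asymptotics.isLittleO_iff] at hlo
  have hlo' := hlo (show (0:ℝ) < c/4 by positivity)
  rw [Metric.eventually_nhds_iff] at hlo'
  obtain ⟨δ, hδ0, hδ⟩ := hlo'
  set r : ℝ := δ / 2 with hrdef
  have hr : 0 < r := by positivity
  have hTaylor : ∀ x : EuclideanSpace ℝ (Fin W), ‖x‖ ≤ r → ‖Φ x - J x‖ ≤ c/4 * ‖x‖ := by
    intro x hx
    have hxδ : dist x 0 < δ := by
      rw [dist_zero_right]; linarith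
    have := hδ hxδ
    simpa [hΦ0, sub_zero] using this
  -- the orthogonal direction
  have hne : (LinearMap.range (J : EuclideanSpace ℝ (Fin W) →ₗ[ℝ] EuclideanSpace ℝ (Fin d)))ᗮ ≠ ⊥ := by
    intro hbot
    have htop : LinearMap.range (J : EuclideanSpace ℝ (Fin W) →ₗ[ℝ] EuclideanSpace ℝ (Fin d)) = ⊤ :=
      Submodule.orthogonal_eq_bot_iff.mp hbot
    have h1 : Module.finrank ℝ (LinearMap.range (J : EuclideanSpace ℝ (Fin W) →ₗ[ℝ] EuclideanSpace ℝ (Fin d))) ≤ W := by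
      have := LinearMap.finrank_range_le (J : EuclideanSpace ℝ (Fin W) →ₗ[ℝ] EuclideanSpace ℝ (Fin d))
      simpa [finrank_euclideanSpace_fin] using this
    rw [htop, finrank_top] at h1
    simp only [finrank_euclideanSpace_fin] at h1
    omega
  obtain ⟨u, hu, hune⟩ := Submodule.exists_mem_ne_zero_of_ne_bot hne
  set f₀ : EuclideanSpace ℝ (Fin d) := (c * r) • ((‖u‖⁻¹ : ℝ) • u) with hf₀def
  have hf₀mem : f₀ ∈ (LinearMap.range (J : EuclideanSpace ℝ (Fin W) →ₗ[ℝ] EuclideanSpace ℝ (Fin d)))ᗮ :=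
    Submodule.smul_mem _ _ (Submodule.smul_mem _ _ hu)
  have hf₀norm : ‖f₀‖ = c * r := by
    have hu0 : ‖u‖ ≠ 0 := norm_ne_zero_iff.mpr hune
    rw [hf₀def, norm_smul, norm_smul, norm_inv, norm_norm, Real.norm_eq_abs,
      abs_of_pos (mul_pos hc hr)]
    field_simp
  have horth : ∀ x : EuclideanSpace ℝ (Fin W), ⟪f₀, J x⟫ = 0 := by
    intro x
    have := (Submodule.mem_orthogonal _ _).1 hf₀mem (J x) ⟨x, rfl⟩
    rwa [real_inner_comm] at this
  set ε : ℝ := c ^ 2 * r / (128 * (M + 1)) with hεdef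
  have hε : 0 < ε := by positivity
  have hε1 : ε ≤ c * r / 4 := by
    rw [hεdef, div_le_div_iff₀ (by positivity) (by norm_num)]
    nlinarith [mul_le_mul_of_nonneg_right hcM (mul_nonneg hc.le hr.le),
      mul_nonneg (mul_nonneg hM0 hc.le) hr.le, mul_pos hc hr]
  have hε2 : ε * (M + c / 4) ≤ c ^ 2 * r / 64 := by
    rw [hεdef]
    rw [div_mul_eq_mul_div, div_le_div_iff₀ (by positivity) (by norm_num)]
    have h1 : (0:ℝ) ≤ c^2*r*M := by positivity
    have h2 : c^2*r*c ≤ c^2*r*M := mul_le_mul_of_nonneg_left hcM (by positivity)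
    have h3 : (0:ℝ) ≤ c^2*r := by positivity
    nlinarith [h1, h2, h3]
  -- bound on ‖Φ x‖ on the ball
  have hΦub : ∀ x : EuclideanSpace ℝ (Fin W), ‖x‖ ≤ r → ‖Φ x‖ ≤ (M + c/4) * ‖x‖ := by
    intro x hx
    calc ‖Φ x‖ = ‖J x + (Φ x - J x)‖ := by rw [add_sub_cancel]
      _ ≤ ‖J x‖ + ‖Φ x - J x‖ := norm_add_le _ _
      _ ≤ M * ‖x‖ + c/4 * ‖x‖ := add_le_add (J.le_opNorm x) (hTaylor x hx)
      _ = (M + c/4) * ‖x‖ := by ring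
  -- key inner product bound
  have hkey : ∀ f ∈ Metric.ball f₀ ε, ∀ x : EuclideanSpace ℝ (Fin W), ‖x‖ ≤ r →
      2 * ⟪f, Φ x⟫ ≤ 17/32 * (c^2 * r^2) := by
    intro f hf x hx
    have hsplit : ⟪f, Φ x⟫ = ⟪f₀, Φ x - J x⟫ + ⟪f - f₀, Φ x⟫ := by
      rw [inner_sub_right, inner_sub_left]
      rw [horth x]
      ring
    have hb1 : ⟪f₀, Φ x - J x⟫ ≤ c^2 * r^2 / 4 := by
      calc ⟪f₀, Φ x - J x⟫ ≤ ‖f₀‖ * ‖Φ x - J x‖ := real_inner_le_norm _ _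
        _ ≤ (c * r) * (c/4 * ‖x‖) := by
            rw [hf₀norm]
            exact mul_le_mul_of_nonneg_left (hTaylor x hx) (by positivity)
        _ ≤ (c * r) * (c/4 * r) := by
            apply mul_le_mul_of_nonneg_left _ (by positivity)
            exact mul_le_mul_of_nonneg_left hx (by positivity)
        _ = c^2 * r^2 / 4 := by ring
    have hb2 : ⟪f - f₀, Φ x⟫ ≤ c^2 * r^2 / 64 := by
      have hdist : ‖f - f₀‖ ≤ ε := by
        rw [Metric.mem_ball, dist_eq_norm] at hf
        exact hf.le
      calc ⟪f - f₀, Φ x⟫ ≤ ‖f - f₀‖ * ‖Φ x‖ := real_inner_le_norm _ _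
        _ ≤ ε * ((M + c/4) * r) := by
            apply mul_le_mul hdist _ (norm_nonneg _) hε.le
            exact (hΦub x hx).trans (mul_le_mul_of_nonneg_left hx (by positivity))
        _ = (ε * (M + c/4)) * r := by ring
        _ ≤ (c^2 * r / 64) * r := mul_le_mul_of_nonneg_right hε2 hr.le
        _ = c^2 * r^2 / 64 := by ring
    nlinarith [hsplit, hb1, hb2]
  -- lower bound on sphere
  have hsph : ∀ f ∈ Metric.ball f₀ ε, ∀ x : EuclideanSpace ℝ (Fin W), ‖x‖ = r →
      ‖f‖^2 + c^2 * r^2 / 32 ≤ ‖f - Φ x‖^2 := by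
    intro f hf x hx
    have h1 := hkey f hf x hx.le
    have hΦlb : 3 * c / 4 * r ≤ ‖Φ x‖ := by
      have h2 := hTaylor x hx.le
      have h3 := hlow x
      have h4 : ‖J x‖ - ‖Φ x - J x‖ ≤ ‖Φ x‖ := by
        have h5 : ‖J x‖ - ‖J x - Φ x‖ ≤ ‖J x - (J x - Φ x)‖ := norm_sub_norm_le _ _
        rw [sub_sub_cancel, norm_sub_rev (J x) (Φ x)] at h5
        exact h5
      rw [hx] at h2 h3
      linarith
    have hΦsq : 9/16 * (c^2 * r^2) ≤ ‖Φ x‖^2 := by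
      nlinarith [norm_nonneg (Φ x)]
    rw [norm_sub_sq_real]
    nlinarith
  -- lower bound on ball
  have hpos : ∀ f ∈ Metric.ball f₀ ε, ∀ x : EuclideanSpace ℝ (Fin W), ‖x‖ ≤ r →
      c^2 * r^2 / 32 ≤ ‖f - Φ x‖^2 := by
    intro f hf x hx
    have h1 := hkey f hf x hx
    have hfnorm : 3 * (c * r) / 4 ≤ ‖f‖ := by
      have hdist : ‖f - f₀‖ ≤ ε := by
        rw [Metric.mem_ball, dist_eq_norm] at hf
        exact hf.le
      have := norm_sub_norm_le f₀ f
      have h6 : ‖f₀‖ - ‖f₀ - f‖ ≤ ‖f‖ := by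
        calc ‖f₀‖ - ‖f₀ - f‖ ≤ ‖f₀ - (f₀ - f)‖ := norm_sub_norm_le _ _
          _ = ‖f‖ := by rw [sub_sub_cancel]
      have h7 : ‖f₀ - f‖ = ‖f - f₀‖ := norm_sub_rev _ _
      rw [hf₀norm, h7] at h6
      linarith
    have hfsq : 9/16 * (c^2 * r^2) ≤ ‖f‖^2 := by
      nlinarith [norm_nonneg f]
    rw [norm_sub_sq_real]
    nlinarith [norm_nonneg (Φ x), sq_nonneg (‖Φ x‖)]
  -- conclusion
  refine ⟨f₀, ε, hε, ?_⟩
  rintro f hf ⟨w, hw0, hwd, hinf⟩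
  -- loss is differentiable
  have hLd : Differentiable ℝ (loss Φ f) := by
    have hC : ContDiff ℝ 2 (loss Φ f) := by
      have h1 : ContDiff ℝ 2 fun x => ‖f - Φ x‖^2 := (contDiff_const.sub hΦ).norm_sq ℝ
      have : (loss Φ f) = fun x => (1/2 : ℝ) * ‖f - Φ x‖^2 := rfl
      rw [this]
      exact contDiff_const.mul h1
    exact hC.differentiable two_ne_zero
  -- the loss along the flow
  have hder : ∀ t ∈ Ici (0:ℝ), HasDerivAt (fun s => loss Φ f (w s))
      (-(‖gradient (loss Φ f) (w t)‖^2)) t := by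
    intro t ht
    have hg := (hLd (w t)).hasGradientAt
    have hcomp := hg.hasFDerivAt.comp_hasDerivAt t (hwd t ht)
    refine hcomp.congr_deriv ?_
    rw [InnerProductSpace.toDual_apply_apply, inner_neg_right, real_inner_self_eq_norm_sq]
  have hanti : AntitoneOn (fun s => loss Φ f (w s)) (Ici (0:ℝ)) := by
    apply antitoneOn_of_deriv_nonpos (convex_Ici 0)
    · exact fun t ht => ((hder t ht).continuousAt).continuousWithinAt
    · intro t ht
      rw [interior_Ici] at ht
      exact ((hder t (mem_Ici.2 (le_of_lt (mem_Ioi.1 ht)))).differentiableAt).differentiableWithinAt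
    · intro t ht
      rw [interior_Ici] at ht
      rw [(hder t (mem_Ici.2 (le_of_lt (mem_Ioi.1 ht)))).deriv]
      simp only [neg_nonpos]
      positivity
  have hloss0 : loss Φ f (w 0) = 1/2 * ‖f‖^2 := by
    rw [hw0]
    simp [loss, hΦ0]
  -- trapping
  have htrap : ∀ t : ℝ, 0 ≤ t → ‖w t‖ < r := by
    by_contra hcon
    push_neg at hcon
    obtain ⟨t, ht0, htr⟩ := hcon
    have hcw : ContinuousOn (fun s => ‖w s‖) (Icc 0 t) :=
      fun s hs => (((hwd s hs.1).continuousAt).norm).continuousWithinAt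
    have hrmem : r ∈ Icc ‖w 0‖ ‖w t‖ := by
      rw [hw0, norm_zero]
      exact ⟨hr.le, htr⟩
    obtain ⟨t₁, ht₁mem, ht₁⟩ := intermediate_value_Icc ht0 hcw hrmem
    have h1 : loss Φ f (w t₁) ≤ loss Φ f (w 0) :=
      hanti (self_mem_Ici) ht₁mem.1 ht₁mem.1
    have h2 := hsph f hf (w t₁) ht₁
    have h3 : loss Φ f (w t₁) = 1/2 * ‖f - Φ (w t₁)‖^2 := rfl
    rw [hloss0, h3] at h1
    nlinarith
  -- infimum bound
  have hlb : ∀ t : Set.Ici (0:ℝ), c^2 * r^2 / 64 ≤ loss Φ f (w t) := by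
    rintro ⟨t, ht⟩
    have := hpos f hf (w t) (htrap t ht).le
    have h3 : loss Φ f (w t) = 1/2 * ‖f - Φ (w t)‖^2 := rfl
    rw [h3]
    linarith
  have hge := le_ciInf hlb
  rw [hinf] at hge
  have : (0:ℝ) < c^2 * r^2 / 64 := by positivity
  linarith
end

section
/- Trapping under uniform non-degeneracy: let 1 ≤ W < d, Φ : ℝ^W → ℝ^d be C², and U ⊆ ℝ^d be open such that on Φ⁻¹(U) the first and second derivatives of Φ are uniformly bounded and the smallest eigenvalue of J(w)*J(w) is bounded below by some c² > 0, where J(w) = DΦ(w). Then F_Φ ∩ U ⊆ Φ(ℝ^W); i.e., every learnable target in U is exactly attained by Φ. -/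
open MeasureTheory Filter Topology Set

lemma cont_induct {h : ℝ → ℝ} {a b : ℝ}
    (hcont : ContinuousOn h (Set.Icc 0 1)) (hab : a < b) (h0 : h 0 ≤ a)
    (step : ∀ s ∈ Set.Icc (0:ℝ) 1, (∀ u ∈ Set.Icc (0:ℝ) s, h u ≤ b) → h s ≤ a) :
    h 1 ≤ a := by
  set K : Set ℝ := {s | s ∈ Set.Icc (0:ℝ) 1 ∧ ∀ u ∈ Set.Icc (0:ℝ) s, h u ≤ b} with hKdef
  have h0K : (0:ℝ) ∈ K := ⟨⟨le_refl _, zero_le_one⟩, fun u hu => by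
    have hu0 : u = 0 := le_antisymm hu.2 hu.1
    rw [hu0]; exact h0.trans hab.le⟩
  have hbdd : BddAbove K := ⟨1, fun s hs => hs.1.2⟩
  have hne : K.Nonempty := ⟨0, h0K⟩
  set m := sSup K with hm
  have hm0 : 0 ≤ m := le_csSup hbdd h0K
  have hm1 : m ≤ 1 := csSup_le hne fun s hs => hs.1.2
  have hlt : ∀ u, 0 ≤ u → u < m → h u ≤ b := by
    intro u hu0 hum
    obtain ⟨s, hsK, hus⟩ := exists_lt_of_lt_csSup hne hum
    exact hsK.2 u ⟨hu0, hus.le⟩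
  have hmK : m ∈ K := by
    refine ⟨⟨hm0, hm1⟩, fun u hu => ?_⟩
    rcases lt_or_eq_of_le hu.2 with h' | h'
    · exact hlt u hu.1 h'
    · rcases eq_or_lt_of_le hm0 with h0m | h0m
      · rw [h', ← h0m]; exact h0.trans hab.le
      · rw [h']
        have hneB : (𝓝[Set.Ico (0:ℝ) m] m).NeBot := by
          rw [← mem_closure_iff_nhdsWithin_neBot, closure_Ico (ne_of_lt h0m)]
          exact ⟨hm0, le_refl m⟩
        have htd : Filter.Tendsto h (𝓝[Set.Ico (0:ℝ) m] m) (𝓝 (h m)) :=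
          (hcont m ⟨hm0, hm1⟩).mono (fun x hx => ⟨hx.1, hx.2.le.trans hm1⟩)
        exact le_of_tendsto htd (eventually_mem_nhdsWithin.mono
          fun u hu => hlt u hu.1 hu.2)
  have hma : h m ≤ a := step m ⟨hm0, hm1⟩ hmK.2
  have hm1' : m = 1 := by
    by_contra hne1
    have hmlt : m < 1 := lt_of_le_of_ne hm1 hne1
    have hev : ∀ᶠ u in 𝓝[Set.Icc (0:ℝ) 1] m, h u < b :=
      (hcont m ⟨hm0, hm1⟩).eventually (eventually_lt_nhds (lt_of_le_of_lt hma hab)) |>.mono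
        (fun u hu => hu)
    obtain ⟨η, hη, hev⟩ := Metric.mem_nhdsWithin_iff.mp hev
    set s' := min 1 (m + η/2) with hs'
    have hms' : m < s' := lt_min_iff.mpr ⟨hmlt, by linarith⟩
    have hs'K : s' ∈ K := by
      refine ⟨⟨hm0.trans hms'.le, min_le_left _ _⟩, fun u hu => ?_⟩
      rcases le_or_gt u m with h' | h'
      · exact hmK.2 u ⟨hu.1, h'⟩
      · have hu1 : u ∈ Set.Icc (0:ℝ) 1 := ⟨hu.1, hu.2.trans (min_le_left _ _)⟩
        have : dist u m < η := by
          rw [Real.dist_eq, abs_of_pos (by linarith)]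
          have := hu.2.trans (min_le_right _ _)
          linarith
        exact (hev ⟨Metric.mem_ball.mpr this, hu1⟩).le
    exact absurd (le_csSup hbdd hs'K) (not_le.mpr hms')
  rw [← hm1']
  exact hma


set_option maxHeartbeats 1000000 in
/-- Trapping under uniform non-degeneracy: if on `Φ⁻¹(U)` the first and second derivatives
of `Φ` are uniformly bounded and the Jacobian is uniformly non-degenerate, then every
learnable target in `U` is exactly attained by `Φ`. -/
theorem trapping_uniform_nondegenerate (W d : ℕ) (hW : 1 ≤ W) (hWd : W < d)
    (Φ : EuclideanSpace ℝ (Fin W) → EuclideanSpace ℝ (Fin d))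
    (hΦ : ContDiff ℝ 2 Φ)
    (U : Set (EuclideanSpace ℝ (Fin d))) (hU : IsOpen U)
    (C : ℝ)
    (hd1 : ∀ w ∈ Φ ⁻¹' U, ‖fderiv ℝ Φ w‖ ≤ C)
    (hd2 : ∀ w ∈ Φ ⁻¹' U, ‖iteratedFDeriv ℝ 2 Φ w‖ ≤ C)
    (c : ℝ) (hc : 0 < c)
    (hnondeg : ∀ w ∈ Φ ⁻¹' U, ∀ v : EuclideanSpace ℝ (Fin W),
      c * ‖v‖ ≤ ‖fderiv ℝ Φ w v‖) :
    learnableSet Φ ∩ U ⊆ Set.range Φ := by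
  rintro f ⟨hfL, hfU⟩
  obtain ⟨w, hw0, hw, hinf⟩ := hfL
  set L : ℝ → ℝ := fun t => loss Φ f (w t) with hLdef
  set C' : ℝ := max C 1 with hC'def
  have hC1 : (1:ℝ) ≤ C' := le_max_right _ _
  have hC0 : (0:ℝ) < C' := lt_of_lt_of_le one_pos hC1
  have hd1' : ∀ x, Φ x ∈ U → ‖fderiv ℝ Φ x‖ ≤ C' := fun x hx => (hd1 x hx).trans (le_max_left _ _)
  have hd2' : ∀ x, Φ x ∈ U → ‖iteratedFDeriv ℝ 2 Φ x‖ ≤ C' :=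
    fun x hx => (hd2 x hx).trans (le_max_left _ _)
  have hΦdiff : Differentiable ℝ Φ := hΦ.differentiable (by norm_num)
  -- smoothness of the loss, derivative of L along the flow
  have hloss : ContDiff ℝ 1 (loss Φ f) := by
    have h1 : ContDiff ℝ 1 fun x : EuclideanSpace ℝ (Fin d) => ‖x‖ ^ 2 := contDiff_norm_sq ℝ
    have h2 : ContDiff ℝ 1 fun v => f - Φ v := contDiff_const.sub (hΦ.of_le one_le_two)
    exact contDiff_const.mul (h1.comp h2)
  have hdiff : Differentiable ℝ (loss Φ f) := hloss.differentiable (by norm_num)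
  have hder : ∀ t, 0 ≤ t → HasDerivAt L (-‖gradient (loss Φ f) (w t)‖ ^ 2) t := by
    intro t ht
    have hg : HasFDerivAt (loss Φ f)
        ((InnerProductSpace.toDual ℝ _) (gradient (loss Φ f) (w t))) (w t) :=
      ((hdiff (w t)).hasGradientAt).hasFDerivAt
    have h2 := hg.comp_hasDerivAt t (hw t ht)
    refine h2.congr_deriv ?_
    simp only [InnerProductSpace.toDual_apply_apply, inner_neg_right]
    rw [real_inner_self_eq_norm_sq]
  have hcontL : ContinuousOn L (Ici 0) := fun t ht => (hder t ht).continuousAt.continuousWithinAt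
  have hanti : AntitoneOn L (Ici 0) := by
    apply antitoneOn_of_deriv_nonpos (convex_Ici 0) hcontL
    · rw [interior_Ici]
      exact fun t ht => ((hder t (le_of_lt ht)).differentiableAt).differentiableWithinAt
    · rw [interior_Ici]
      intro t ht
      rw [(hder t (le_of_lt ht)).deriv]
      exact neg_nonpos.mpr (sq_nonneg _)
  have hsmall : ∀ ε > (0:ℝ), ∃ T : ℝ, 0 ≤ T ∧ L T < ε := by
    intro ε hε
    have hlt : (⨅ t : Set.Ici (0:ℝ), L ↑t) < ε := by
      rw [hLdef]; rw [hinf] at *; exact hε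
    obtain ⟨⟨T, hT⟩, hTe⟩ := exists_lt_of_ciInf_lt hlt
    exact ⟨T, hT, hTe⟩
  -- constants
  obtain ⟨δ₀, hδ₀, hball⟩ := Metric.isOpen_iff.mp hU f hfU
  set δ := δ₀ / 2 with hδdef
  have hδ : 0 < δ := by positivity
  have hballU : Metric.closedBall f δ ⊆ U :=
    (Metric.closedBall_subset_ball (by simp only [hδdef]; linarith)).trans hball
  set r := min (c / (2 * C')) (δ / (4 * C')) with hrdef
  have hr : 0 < r := lt_min (by positivity) (by positivity)
  have hrc : C' * r ≤ c / 2 := by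
    have h1 : r ≤ c / (2 * C') := min_le_left _ _
    calc C' * r ≤ C' * (c / (2 * C')) := mul_le_mul_of_nonneg_left h1 hC0.le
    _ = c / 2 := by field_simp
  have hrδ : C' * r ≤ δ / 4 := by
    have h1 : r ≤ δ / (4 * C') := min_le_right _ _
    calc C' * r ≤ C' * (δ / (4 * C')) := mul_le_mul_of_nonneg_left h1 hC0.le
    _ = δ / 4 := by field_simp
  set ε := min (c ^ 2 * r ^ 2 / 128) (δ ^ 2 / 32) with hεdef
  have hε : 0 < ε := lt_min (by positivity) (by positivity)
  obtain ⟨T, hT0, hLT⟩ := hsmall ε hε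
  set w₀ := w T with hw₀def
  set J₀ := fderiv ℝ Φ w₀ with hJ₀def
  have ha2 : ‖f - Φ w₀‖ ^ 2 = 2 * L T := by
    rw [hLdef]; simp only [loss]; ring
  have haε : ‖f - Φ w₀‖ ^ 2 < 2 * ε := by rw [ha2]; linarith
  have ha_cr : ‖f - Φ w₀‖ < c * r / 8 := by
    have h1 : ε ≤ c ^ 2 * r ^ 2 / 128 := min_le_left _ _
    have h2 : ‖f - Φ w₀‖ ^ 2 < (c * r / 8) ^ 2 := by nlinarith
    exact lt_of_pow_lt_pow_left₀ 2 (by positivity) h2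
  have ha_δ : ‖f - Φ w₀‖ < δ / 4 := by
    have h1 : ε ≤ δ ^ 2 / 32 := min_le_right _ _
    have h2 : ‖f - Φ w₀‖ ^ 2 < (δ / 4) ^ 2 := by nlinarith
    exact lt_of_pow_lt_pow_left₀ 2 (by positivity) h2
  -- Step: closed ball around w₀ maps into closedBall f (δ/2)
  have ballU : ∀ x ∈ Metric.closedBall w₀ r, ‖Φ x - f‖ ≤ δ / 2 := by
    intro w₁ hw₁
    have hw₁n : ‖w₁ - w₀‖ ≤ r := by rwa [← dist_eq_norm, ← Metric.mem_closedBall]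
    have key : (fun s : ℝ => ‖Φ (w₀ + s • (w₁ - w₀)) - f‖) 1 ≤ δ / 2 := by
      apply cont_induct (h := fun s : ℝ => ‖Φ (w₀ + s • (w₁ - w₀)) - f‖) (b := δ)
      · apply Continuous.continuousOn
        exact (hΦ.continuous.comp (continuous_const.add
          (continuous_id.smul continuous_const))).sub continuous_const |>.norm
      · linarith
      · simp only [zero_smul, add_zero]
        rw [norm_sub_rev]; linarith
      · intro s hs hsb
        set p : ℝ → EuclideanSpace ℝ (Fin W) := fun u => w₀ + u • (w₁ - w₀) with hpdef
        have hmem : ∀ x ∈ segment ℝ w₀ (p s), ∃ u ∈ Set.Icc (0:ℝ) s, x = p u := by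
          intro x hx
          rw [segment_eq_image'] at hx
          obtain ⟨θ, hθ, hx⟩ := hx
          refine ⟨θ * s, ⟨mul_nonneg hθ.1 hs.1, by nlinarith [hθ.1, hθ.2, hs.1]⟩, ?_⟩
          rw [← hx]
          simp only [hpdef]
          rw [add_sub_cancel_left, smul_smul]
        have hsegU : ∀ x ∈ segment ℝ w₀ (p s), Φ x ∈ U := by
          intro x hx
          obtain ⟨u, hu, rfl⟩ := hmem x hx
          apply hballU
          rw [Metric.mem_closedBall, dist_eq_norm]
          exact hsb u hu
        have hmv : ‖Φ (p s) - Φ w₀‖ ≤ C' * ‖p s - w₀‖ :=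
          (convex_segment _ _).norm_image_sub_le_of_norm_fderiv_le
            (fun x _ => (hΦdiff x))
            (fun x hx => hd1' x (hsegU x hx))
            (left_mem_segment ℝ w₀ (p s)) (right_mem_segment ℝ w₀ (p s))
        have hps : ‖p s - w₀‖ ≤ r := by
          simp only [hpdef, add_sub_cancel_left]
          rw [norm_smul, Real.norm_of_nonneg hs.1]
          nlinarith [hs.1, hs.2, norm_nonneg (w₁ - w₀)]
        have : ‖Φ (p s) - f‖ ≤ ‖Φ (p s) - Φ w₀‖ + ‖Φ w₀ - f‖ := by
          have : Φ (p s) - f = (Φ (p s) - Φ w₀) + (Φ w₀ - f) := by abel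
          rw [this]; exact norm_add_le _ _
        have h4 : ‖Φ w₀ - f‖ < δ / 4 := by rwa [norm_sub_rev]
        calc ‖Φ (p s) - f‖ ≤ C' * ‖p s - w₀‖ + ‖Φ w₀ - f‖ := by linarith
          _ ≤ C' * r + δ / 4 := by nlinarith
          _ ≤ δ / 2 := by linarith
    simpa using key
  have hballpre : Metric.closedBall w₀ r ⊆ Φ ⁻¹' U := by
    intro x hx
    apply hballU
    rw [Metric.mem_closedBall, dist_eq_norm]
    exact (ballU x hx).trans (by linarith)
  -- trapping: the trajectory after time T stays in the ball of radius r around w₀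
  have trap : ∀ t, T ≤ t → ‖w t - w₀‖ < r := by
    by_contra hcon
    push_neg at hcon
    obtain ⟨t₂, ht₂T, ht₂r⟩ := hcon
    set S := {t : ℝ | T ≤ t ∧ r ≤ ‖w t - w₀‖} with hSdef
    have hSne : S.Nonempty := ⟨t₂, ht₂T, ht₂r⟩
    have hSbd : BddBelow S := ⟨T, fun s hs => hs.1⟩
    set t₁ := sInf S with ht₁def
    have ht₁T : T ≤ t₁ := le_csInf hSne fun s hs => hs.1
    have hwc : ∀ t : ℝ, 0 ≤ t → ContinuousAt (fun u => ‖w u - w₀‖) t := fun t ht =>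
      (((hw t ht).continuousAt).sub continuousAt_const).norm
    have ht₁0 : (0:ℝ) ≤ t₁ := hT0.trans ht₁T
    have ht₁mem : r ≤ ‖w t₁ - w₀‖ := by
      by_contra hlt'
      push_neg at hlt'
      have hev := (hwc t₁ ht₁0).eventually (eventually_lt_nhds hlt')
      obtain ⟨η, hη, hev⟩ := Metric.eventually_nhds_iff.mp hev
      have hsInf : sInf S < t₁ + η := by rw [← ht₁def]; linarith
      obtain ⟨s, hsS, hst⟩ := (csInf_lt_iff hSbd hSne).mp hsInf
      have hts : t₁ ≤ s := csInf_le hSbd hsS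
      have hsr : ‖w s - w₀‖ < r := hev (by rw [Real.dist_eq, abs_of_nonneg (by linarith)]; linarith)
      exact absurd hsS.2 (not_le.mpr hsr)
    have hTneS : T ∉ S := by
      intro hT
      have h2 : r ≤ ‖w T - w₀‖ := hT.2
      rw [hw₀def, sub_self, norm_zero] at h2
      exact absurd h2 (not_le.mpr hr)
    have ht₁gtT : T < t₁ := by
      rcases lt_or_eq_of_le ht₁T with h | h
      · exact h
      · exact absurd ⟨le_refl T, by rw [h]; exact ht₁mem⟩ hTneS
    have hlt₁ : ∀ t, T ≤ t → t < t₁ → ‖w t - w₀‖ < r := by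
      intro t h1 h2
      by_contra h3
      push_neg at h3
      exact absurd (csInf_le hSbd ⟨h1, h3⟩) (not_le.mpr h2)
    have ht₁le : ‖w t₁ - w₀‖ ≤ r := by
      have htd : Filter.Tendsto (fun u => ‖w u - w₀‖) (𝓝[<] t₁) (𝓝 (‖w t₁ - w₀‖)) :=
        (hwc t₁ ht₁0).continuousWithinAt
      refine le_of_tendsto htd ?_
      have hev : ∀ᶠ t in 𝓝[<] t₁, T < t :=
        Filter.Eventually.filter_mono nhdsWithin_le_nhds (eventually_gt_nhds ht₁gtT)
      filter_upwards [hev, self_mem_nhdsWithin] with t h1 h2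
      exact (hlt₁ t h1.le h2).le
    have ht₁eq : ‖w t₁ - w₀‖ = r := le_antisymm ht₁le ht₁mem
    have hwt₁ball : w t₁ ∈ Metric.closedBall w₀ r := by
      rw [Metric.mem_closedBall, dist_eq_norm, ht₁eq]
    -- Taylor estimate on the ball
    have hFd : Differentiable ℝ (fderiv ℝ Φ) :=
      (hΦ.fderiv_right (m := 1) (by norm_num)).differentiable (by norm_num)
    have hJbound : ∀ x ∈ Metric.closedBall w₀ r, ‖fderiv ℝ Φ x - J₀‖ ≤ C' * r := by
      intro x hx
      have bound : ∀ y ∈ Metric.closedBall w₀ r, ‖fderiv ℝ (fderiv ℝ Φ) y‖ ≤ C' := by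
        intro y hy
        have e1 : ‖fderiv ℝ (fderiv ℝ Φ) y‖ = ‖iteratedFDeriv ℝ 2 Φ y‖ :=
          calc ‖fderiv ℝ (fderiv ℝ Φ) y‖
              = ‖iteratedFDeriv ℝ 0 (fderiv ℝ (fderiv ℝ Φ)) y‖ := (norm_iteratedFDeriv_zero (f := fderiv ℝ (fderiv ℝ Φ)) (x := y)).symm
            _ = ‖iteratedFDeriv ℝ 1 (fderiv ℝ Φ) y‖ := norm_iteratedFDeriv_fderiv
            _ = ‖iteratedFDeriv ℝ 2 Φ y‖ := norm_iteratedFDeriv_fderiv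
        rw [e1]
        exact hd2' y (hballpre hy)
      have mv := (convex_closedBall w₀ r).norm_image_sub_le_of_norm_fderiv_le
        (fun y _ => hFd y) bound (Metric.mem_closedBall_self hr.le) hx
      have hxr : ‖x - w₀‖ ≤ r := by rwa [← dist_eq_norm, ← Metric.mem_closedBall]
      calc ‖fderiv ℝ Φ x - J₀‖ ≤ C' * ‖x - w₀‖ := mv
        _ ≤ C' * r := mul_le_mul_of_nonneg_left hxr hC0.le
    have taylor : ‖Φ (w t₁) - Φ w₀ - J₀ (w t₁ - w₀)‖ ≤ C' * r * r := by
      have hgd : ∀ y, DifferentiableAt ℝ (fun x => Φ x - J₀ x) y :=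
        fun y => (hΦdiff y).sub (J₀.differentiable y)
      have hgb : ∀ y ∈ Metric.closedBall w₀ r, ‖fderiv ℝ (fun x => Φ x - J₀ x) y‖ ≤ C' * r := by
        intro y hy
        rw [fderiv_fun_sub (hΦdiff y) (J₀.differentiable y), J₀.fderiv]
        exact hJbound y hy
      have mv := (convex_closedBall w₀ r).norm_image_sub_le_of_norm_fderiv_le
        (fun y _ => hgd y) hgb (Metric.mem_closedBall_self hr.le) hwt₁ball
      have heq : Φ (w t₁) - J₀ (w t₁) - (Φ w₀ - J₀ w₀) = Φ (w t₁) - Φ w₀ - J₀ (w t₁ - w₀) := by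
        rw [map_sub]; abel
      rw [heq] at mv
      calc ‖Φ (w t₁) - Φ w₀ - J₀ (w t₁ - w₀)‖ ≤ C' * r * ‖w t₁ - w₀‖ := mv
        _ = C' * r * r := by rw [ht₁eq]
    -- lower bound for ‖Φ (w t₁) - Φ w₀‖
    have hΦw₀U : Φ w₀ ∈ U := hballpre (Metric.mem_closedBall_self hr.le)
    have hJh : c * r ≤ ‖J₀ (w t₁ - w₀)‖ := by
      have h := hnondeg w₀ hΦw₀U (w t₁ - w₀)
      rwa [ht₁eq] at h
    have hbb : c * r / 2 ≤ ‖Φ (w t₁) - Φ w₀‖ := by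
      have h1 : ‖J₀ (w t₁ - w₀)‖ - ‖Φ (w t₁) - Φ w₀‖ ≤ ‖Φ (w t₁) - Φ w₀ - J₀ (w t₁ - w₀)‖ :=
        calc ‖J₀ (w t₁ - w₀)‖ - ‖Φ (w t₁) - Φ w₀‖
            ≤ ‖J₀ (w t₁ - w₀) - (Φ (w t₁) - Φ w₀)‖ := norm_sub_norm_le _ _
          _ = ‖Φ (w t₁) - Φ w₀ - J₀ (w t₁ - w₀)‖ := norm_sub_rev _ _
      have h2 : C' * r * r ≤ c / 2 * r := mul_le_mul_of_nonneg_right hrc hr.le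
      linarith
    -- the quadratic expansion and the contradiction
    have hLt₁ : L t₁ ≤ L T := hanti (Set.mem_Ici.mpr hT0) (Set.mem_Ici.mpr ht₁0) ht₁T
    have hexp : ‖(f - Φ w₀) - (Φ (w t₁) - Φ w₀)‖ ^ 2
        = ‖f - Φ w₀‖ ^ 2 - 2 * inner ℝ (f - Φ w₀) (Φ (w t₁) - Φ w₀) + ‖Φ (w t₁) - Φ w₀‖ ^ 2 :=
      norm_sub_sq_real _ _
    have habeq : (f - Φ w₀) - (Φ (w t₁) - Φ w₀) = f - Φ (w t₁) := by abel
    rw [habeq] at hexp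
    have h2L₁ : ‖f - Φ (w t₁)‖ ^ 2 = 2 * L t₁ := by rw [hLdef]; simp only [loss]; ring
    have hinn : inner ℝ (f - Φ w₀) (Φ (w t₁) - Φ w₀) ≤ ‖f - Φ w₀‖ * ‖Φ (w t₁) - Φ w₀‖ :=
      real_inner_le_norm _ _
    have hbbpos : (0:ℝ) < ‖Φ (w t₁) - Φ w₀‖ := lt_of_lt_of_le (by positivity) hbb
    have key1 : ‖Φ (w t₁) - Φ w₀‖ ^ 2 ≤ 2 * (‖f - Φ w₀‖ * ‖Φ (w t₁) - Φ w₀‖) := by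
      linarith
    have key2 : ‖f - Φ w₀‖ * ‖Φ (w t₁) - Φ w₀‖ < c * r / 8 * ‖Φ (w t₁) - Φ w₀‖ :=
      mul_lt_mul_of_pos_right ha_cr hbbpos
    have key3 : c * r / 2 * ‖Φ (w t₁) - Φ w₀‖ ≤ ‖Φ (w t₁) - Φ w₀‖ * ‖Φ (w t₁) - Φ w₀‖ :=
      mul_le_mul_of_nonneg_right hbb hbbpos.le
    have key4 : ‖Φ (w t₁) - Φ w₀‖ * ‖Φ (w t₁) - Φ w₀‖ = ‖Φ (w t₁) - Φ w₀‖ ^ 2 := by ring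
    have key5 : c * r / 4 * ‖Φ (w t₁) - Φ w₀‖ < c * r / 2 * ‖Φ (w t₁) - Φ w₀‖ := by
      have h9 : c * r / 4 < c * r / 2 := by linarith [mul_pos hc hr]
      exact mul_lt_mul_of_pos_right h9 hbbpos
    linarith
  -- conclusion: f lies in the (compact, hence closed) image of the closed ball
  have hclosed : IsClosed (Φ '' Metric.closedBall w₀ r) :=
    ((isCompact_closedBall w₀ r).image hΦ.continuous).isClosed
  have hmemcl : f ∈ closure (Φ '' Metric.closedBall w₀ r) := by
    rw [Metric.mem_closure_iff]
    intro η hη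
    obtain ⟨t, ht0, hLt⟩ := hsmall (η ^ 2 / 2) (by positivity)
    set t' := max T t with ht'def
    have ht'0 : (0:ℝ) ≤ t' := le_trans ht0 (le_max_right _ _)
    have h1 : L t' ≤ L t := hanti (Set.mem_Ici.mpr ht0) (Set.mem_Ici.mpr ht'0) (le_max_right _ _)
    refine ⟨Φ (w t'), ⟨w t', ?_, rfl⟩, ?_⟩
    · rw [Metric.mem_closedBall, dist_eq_norm]
      exact (trap t' (le_max_left _ _)).le
    · have h2 : ‖f - Φ (w t')‖ ^ 2 = 2 * L t' := by rw [hLdef]; simp only [loss]; ring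
      rw [dist_eq_norm]
      have h3 : ‖f - Φ (w t')‖ ^ 2 < η ^ 2 := by rw [h2]; linarith
      exact lt_of_pow_lt_pow_left₀ 2 hη.le h3
  rw [hclosed.closure_eq] at hmemcl
  obtain ⟨x, _, hx⟩ := hmemcl
  exact ⟨x, hx⟩
end

section
/- Quantitative barrier on a sphere: let Φ : ℝ^W → ℝ^d be C², w₀ ∈ ℝ^W, and suppose on the ball B(w₀, r₀) one has c‖Δw‖ ≤ ‖J(w₀)Δw‖ ≤ C‖Δw‖ and ‖Φ(w₀+Δw) − Φ(w₀) − J(w₀)Δw‖ ≤ C‖Δw‖² for ‖Δw‖ ≤ r₀, with constants 0 < c ≤ C < ∞. If ‖f − Φ(w₀)‖ ≤ √(2ε), then for all Δw with ‖Δw‖ = r ≤ r₀: L_f(w₀+Δw) − L_f(w₀) ≥ (c²/2)r² − C²r³ − √(2ε)·C·(r + r²). -/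
open MeasureTheory Filter Topology Set

/-- Quantitative barrier on a sphere around a point `w₀` of small loss. -/
theorem barrier_on_sphere (W d : ℕ)
    (Φ : EuclideanSpace ℝ (Fin W) → EuclideanSpace ℝ (Fin d))
    (hΦ : ContDiff ℝ 2 Φ)
    (w₀ : EuclideanSpace ℝ (Fin W)) (r₀ c C : ℝ) (hr₀ : 0 < r₀)
    (hc : 0 < c) (hcC : c ≤ C)
    (hJ : ∀ Δw : EuclideanSpace ℝ (Fin W), ‖Δw‖ ≤ r₀ →
      c * ‖Δw‖ ≤ ‖fderiv ℝ Φ w₀ Δw‖ ∧ ‖fderiv ℝ Φ w₀ Δw‖ ≤ C * ‖Δw‖)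
    (hTaylor : ∀ Δw : EuclideanSpace ℝ (Fin W), ‖Δw‖ ≤ r₀ →
      ‖Φ (w₀ + Δw) - Φ w₀ - fderiv ℝ Φ w₀ Δw‖ ≤ C * ‖Δw‖ ^ 2)
    (ε : ℝ) (hε : 0 ≤ ε)
    (f : EuclideanSpace ℝ (Fin d)) (hf : ‖f - Φ w₀‖ ≤ Real.sqrt (2 * ε)) :
    ∀ (Δw : EuclideanSpace ℝ (Fin W)) (r : ℝ), ‖Δw‖ = r → r ≤ r₀ →
      loss Φ f (w₀ + Δw) - loss Φ f w₀ ≥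
        (c ^ 2 / 2) * r ^ 2 - C ^ 2 * r ^ 3 - Real.sqrt (2 * ε) * C * (r + r ^ 2) := by
  intro Δw r hr hrr0
  have hrn : 0 ≤ r := hr ▸ norm_nonneg Δw
  have hΔ : ‖Δw‖ ≤ r₀ := by rw [hr]; exact hrr0
  obtain ⟨hJ1, hJ2⟩ := hJ Δw hΔ
  have hT := hTaylor Δw hΔ
  rw [hr] at hJ1 hJ2 hT
  set u := Φ (w₀ + Δw) - Φ w₀ with hu
  set a := f - Φ w₀ with ha
  have hid : loss Φ f (w₀ + Δw) - loss Φ f w₀ = (1/2) * ‖u‖^2 - inner ℝ a u := by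
    have h1 : f - Φ (w₀ + Δw) = a - u := by rw [ha, hu]; abel
    simp only [loss, h1, ← ha]
    rw [norm_sub_sq_real]
    ring
  rw [hid]
  have hul : c * r - C * r^2 ≤ ‖u‖ := by
    have h2 : ‖fderiv ℝ Φ w₀ Δw‖ - ‖u‖ ≤ C * r^2 := by
      calc ‖fderiv ℝ Φ w₀ Δw‖ - ‖u‖ ≤ ‖fderiv ℝ Φ w₀ Δw - u‖ := norm_sub_norm_le _ _
        _ = ‖u - fderiv ℝ Φ w₀ Δw‖ := norm_sub_rev _ _
        _ ≤ C * r^2 := hT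
    linarith
  have huu : ‖u‖ ≤ C * r + C * r^2 := by
    calc ‖u‖ ≤ ‖fderiv ℝ Φ w₀ Δw‖ + ‖u - fderiv ℝ Φ w₀ Δw‖ := by
          have := norm_add_le (fderiv ℝ Φ w₀ Δw) (u - fderiv ℝ Φ w₀ Δw)
          simpa using this
      _ ≤ C * r + C * r^2 := add_le_add hJ2 hT
  have hsq : 0 ≤ Real.sqrt (2 * ε) := Real.sqrt_nonneg _
  have hinner : (inner ℝ a u : ℝ) ≤ Real.sqrt (2 * ε) * C * (r + r^2) := by
    calc (inner ℝ a u : ℝ) ≤ ‖a‖ * ‖u‖ := real_inner_le_norm a u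
      _ ≤ Real.sqrt (2 * ε) * (C * r + C * r^2) :=
          mul_le_mul hf huu (norm_nonneg u) hsq
      _ = Real.sqrt (2 * ε) * C * (r + r^2) := by ring
  have hun : 0 ≤ ‖u‖ := norm_nonneg u
  have hC : (0:ℝ) < C := lt_of_lt_of_le hc hcC
  have hkey : c^2/2 * r^2 - C^2 * r^3 ≤ 1/2 * ‖u‖^2 := by
    rcases le_or_gt 0 (c*r - C*r^2) with h | h
    · have h2 : (c*r - C*r^2)^2 ≤ ‖u‖^2 := by
        apply sq_le_sq' _ hul
        linarith
      nlinarith [mul_nonneg (mul_nonneg (sub_nonneg.2 hcC) hC.le) (pow_nonneg hrn 3),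
        sq_nonneg (C*r^2)]
    · nlinarith [mul_nonneg (mul_nonneg hC.le hC.le) (pow_nonneg hrn 3),
        mul_nonneg hc.le hrn, sq_nonneg ‖u‖]
  linarith
end

section
/- Let 1 ≤ W < d and Φ : ℝ^W → ℝ^d be given by Φ_i(w) = sin(Σ_{j=1}^W a_{ij} w_j) for arbitrary real constants a_{ij}. Then the set F_Φ of gradient-flow-learnable targets has Lebesgue measure 0 in ℝ^d. -/
open MeasureTheory Filter Topology Set

/-! ### Auxiliary definitions and lemmas -/

/-- The sine model as a named function. -/
noncomputable def PhiModel {W d : ℕ} (a : Fin d → Fin W → ℝ) :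
    EuclideanSpace ℝ (Fin W) → EuclideanSpace ℝ (Fin d) :=
  fun w => WithLp.toLp 2 (fun i => Real.sin (∑ j, a i j * w j))

lemma phiModel_differentiable {W d : ℕ} (a : Fin d → Fin W → ℝ) :
    Differentiable ℝ (PhiModel a) := by
  have h1 : Differentiable ℝ (fun w : EuclideanSpace ℝ (Fin W) =>
      (fun i => Real.sin (∑ j, a i j * w j) : Fin d → ℝ)) := by
    rw [differentiable_pi]
    intro i
    apply Real.differentiable_sin.comp
    apply Differentiable.fun_sum
    intro j _
    exact (differentiable_const _).mul (EuclideanSpace.proj (𝕜 := ℝ) j).differentiable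
  exact ((EuclideanSpace.equiv (Fin d) ℝ).symm.differentiable).comp h1

lemma loss_differentiable {W d : ℕ} {Φ : EuclideanSpace ℝ (Fin W) → EuclideanSpace ℝ (Fin d)}
    (hΦ : Differentiable ℝ Φ) (f : EuclideanSpace ℝ (Fin d)) :
    Differentiable ℝ (loss Φ f) := by
  have hsub : Differentiable ℝ (fun w => f - Φ w) := (differentiable_const f).sub hΦ
  have h2 : Differentiable ℝ (fun w => ‖f - Φ w‖ ^ 2) := by
    simp_rw [← real_inner_self_eq_norm_sq]
    exact hsub.inner ℝ hsub
  exact (differentiable_const _).mul h2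

lemma loss_nonneg {W d : ℕ} (Φ : EuclideanSpace ℝ (Fin W) → EuclideanSpace ℝ (Fin d))
    (f : EuclideanSpace ℝ (Fin d)) (w : EuclideanSpace ℝ (Fin W)) : 0 ≤ loss Φ f w := by
  unfold loss; positivity

lemma coord_sq_le {W d : ℕ} (Φ : EuclideanSpace ℝ (Fin W) → EuclideanSpace ℝ (Fin d))
    (f : EuclideanSpace ℝ (Fin d)) (w : EuclideanSpace ℝ (Fin W)) (i : Fin d) :
    (f i - Φ w i) ^ 2 ≤ 2 * loss Φ f w := by
  have h1 : ‖f - Φ w‖ ^ 2 = ∑ k, ‖(f - Φ w) k‖ ^ 2 := by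
    rw [EuclideanSpace.norm_eq, Real.sq_sqrt]
    positivity
  have h2 : (f i - Φ w i) ^ 2 ≤ ∑ k, ‖(f - Φ w) k‖ ^ 2 := by
    have := Finset.single_le_sum (f := fun k => ‖(f - Φ w) k‖ ^ 2)
      (fun k _ => by positivity) (Finset.mem_univ i)
    simpa [PiLp.sub_apply, sq_abs] using this
  unfold loss
  rw [← h1] at h2
  linarith

lemma loss_hasDerivAt {W d : ℕ} {Φ : EuclideanSpace ℝ (Fin W) → EuclideanSpace ℝ (Fin d)}
    (hΦ : Differentiable ℝ Φ) (f : EuclideanSpace ℝ (Fin d))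
    {w : ℝ → EuclideanSpace ℝ (Fin W)} {t : ℝ}
    (hw : HasDerivAt w (-(gradient (loss Φ f) (w t))) t) :
    HasDerivAt (fun s => loss Φ f (w s)) (-‖gradient (loss Φ f) (w t)‖ ^ 2) t := by
  have hL : DifferentiableAt ℝ (loss Φ f) (w t) :=
    (loss_differentiable hΦ f).differentiableAt
  have hg := hL.hasGradientAt
  have hfd := hg.hasFDerivAt
  have hcomp := hfd.comp_hasDerivAt t hw
  refine hcomp.congr_deriv ?_
  rw [InnerProductSpace.toDual_apply_apply, inner_neg_right, real_inner_self_eq_norm_sq]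

lemma exists_sin_eq_one (c : ℝ) : ∃ y ∈ Icc c (c + 2 * Real.pi), Real.sin y = 1 := by
  have hπ := Real.pi_pos
  refine ⟨Real.pi / 2 + ⌈(c - Real.pi / 2) / (2 * Real.pi)⌉ * (2 * Real.pi), ⟨?_, ?_⟩, ?_⟩
  · have h1 : (c - Real.pi / 2) / (2 * Real.pi) ≤ ⌈(c - Real.pi / 2) / (2 * Real.pi)⌉ := Int.le_ceil _
    have h2 : (c - Real.pi / 2) ≤ ⌈(c - Real.pi / 2) / (2 * Real.pi)⌉ * (2 * Real.pi) := by
      rw [← div_le_iff₀ (by positivity)]; exact h1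
    linarith
  · have h1 : (⌈(c - Real.pi / 2) / (2 * Real.pi)⌉ : ℝ) < (c - Real.pi / 2) / (2 * Real.pi) + 1 :=
      Int.ceil_lt_add_one _
    have h2 : (⌈(c - Real.pi / 2) / (2 * Real.pi)⌉ : ℝ) * (2 * Real.pi) <
        ((c - Real.pi / 2) / (2 * Real.pi) + 1) * (2 * Real.pi) := by
      apply mul_lt_mul_of_pos_right h1 (by positivity)
    rw [add_mul, div_mul_cancel₀ _ (by positivity : (2:ℝ) * Real.pi ≠ 0)] at h2
    linarith
  · rw [Real.sin_add_int_mul_two_pi, Real.sin_pi_div_two]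

lemma exists_sin_eq_neg_one (c : ℝ) : ∃ y ∈ Icc (c - 2 * Real.pi) c, Real.sin y = -1 := by
  obtain ⟨y, ⟨hy1, hy2⟩, hy⟩ := exists_sin_eq_one (-c)
  refine ⟨-y, ⟨by linarith, by linarith⟩, by rw [Real.sin_neg, hy]⟩

lemma loss_eventually_small {W d : ℕ} {Φ : EuclideanSpace ℝ (Fin W) → EuclideanSpace ℝ (Fin d)}
    {f : EuclideanSpace ℝ (Fin d)} {w : ℝ → EuclideanSpace ℝ (Fin W)}
    (hL : ∀ t ≥ (0:ℝ), HasDerivAt (fun s => loss Φ f (w s))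
      (-‖gradient (loss Φ f) (w t)‖ ^ 2) t)
    (hinf : (⨅ t : Set.Ici (0 : ℝ), loss Φ f (w t)) = 0)
    {ε : ℝ} (hε : 0 < ε) : ∃ T ≥ (0:ℝ), ∀ t ≥ T, loss Φ f (w t) < ε := by
  set g : ℝ → ℝ := fun s => loss Φ f (w s) with hg
  have hanti : AntitoneOn g (Ici (0:ℝ)) := by
    apply antitoneOn_of_deriv_nonpos (convex_Ici 0)
    · exact fun t ht => ((hL t ht).continuousAt).continuousWithinAt
    · intro t ht
      rw [interior_Ici] at ht
      exact ((hL t ht.le).differentiableAt).differentiableWithinAt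
    · intro t ht
      rw [interior_Ici] at ht
      rw [(hL t ht.le).deriv]
      simp [sq_nonneg]
  have hex : ∃ t : Set.Ici (0:ℝ), g t < ε := by
    by_contra hcon
    push_neg at hcon
    have : ε ≤ ⨅ t : Set.Ici (0 : ℝ), g t := le_ciInf hcon
    rw [hinf] at this
    linarith
  obtain ⟨⟨T, hT⟩, hTε⟩ := hex
  exact ⟨T, hT, fun t ht => lt_of_le_of_lt (hanti hT (le_trans hT ht) ht) hTε⟩

lemma abs_coord_le_one {W d : ℕ} (a : Fin d → Fin W → ℝ)
    {f : EuclideanSpace ℝ (Fin d)} {w : ℝ → EuclideanSpace ℝ (Fin W)}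
    (hw : ∀ t ≥ (0:ℝ), HasDerivAt w (-(gradient (loss (PhiModel a) f) (w t))) t)
    (hinf : (⨅ t : Set.Ici (0 : ℝ), loss (PhiModel a) f (w t)) = 0)
    (i : Fin d) : |f i| ≤ 1 := by
  have hL : ∀ t ≥ (0:ℝ), HasDerivAt (fun s => loss (PhiModel a) f (w s))
      (-‖gradient (loss (PhiModel a) f) (w t)‖ ^ 2) t :=
    fun t ht => loss_hasDerivAt (phiModel_differentiable a) f (hw t ht)
  have key : ∀ ε > (0:ℝ), |f i| ≤ 1 + ε := by
    intro ε hε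
    obtain ⟨T, hT0, hT⟩ := loss_eventually_small hL hinf (by positivity : (0:ℝ) < ε ^ 2 / 2)
    have h1 : (f i - PhiModel a (w T) i) ^ 2 ≤ 2 * loss (PhiModel a) f (w T) :=
      coord_sq_le _ f (w T) i
    have h2 : 2 * loss (PhiModel a) f (w T) < ε ^ 2 := by
      have := hT T (le_refl T); linarith
    have h3 : |f i - PhiModel a (w T) i| < ε := by
      nlinarith [sq_abs (f i - PhiModel a (w T) i), abs_nonneg (f i - PhiModel a (w T) i)]
    have h4 : |PhiModel a (w T) i| ≤ 1 := by
      show |Real.sin _| ≤ 1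
      exact abs_le.mpr ⟨Real.neg_one_le_sin _, Real.sin_le_one _⟩
    calc |f i| ≤ |f i - PhiModel a (w T) i| + |PhiModel a (w T) i| := by
          have := abs_sub_abs_le_abs_sub (f i) (PhiModel a (w T) i); linarith [abs_add_le
            (f i - PhiModel a (w T) i) (PhiModel a (w T) i), abs_nonneg (PhiModel a (w T) i)]
      _ ≤ ε + 1 := by linarith [le_of_lt h3]
      _ = 1 + ε := by ring
  exact le_of_forall_pos_le_add key

lemma trapped {W d : ℕ} (hd : 0 < d) (a : Fin d → Fin W → ℝ)
    {f : EuclideanSpace ℝ (Fin d)} {w : ℝ → EuclideanSpace ℝ (Fin W)}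
    (hw : ∀ t ≥ (0:ℝ), HasDerivAt w (-(gradient (loss (PhiModel a) f) (w t))) t)
    (hinf : (⨅ t : Set.Ici (0 : ℝ), loss (PhiModel a) f (w t)) = 0)
    (hlt : ∀ i, |f i| < 1) :
    f ∈ Set.range (PhiModel a) := by
  haveI : Nonempty (Fin d) := Fin.pos_iff_nonempty.mp hd
  set Φ := PhiModel a with hΦdef
  have hL : ∀ t ≥ (0:ℝ), HasDerivAt (fun s => loss Φ f (w s))
      (-‖gradient (loss Φ f) (w t)‖ ^ 2) t :=
    fun t ht => loss_hasDerivAt (phiModel_differentiable a) f (hw t ht)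
  set m : ℝ := Finset.univ.sup' Finset.univ_nonempty (fun i => |f i|) with hm
  have hm_lt : m < 1 := by
    rw [hm, Finset.sup'_lt_iff]
    exact fun i _ => hlt i
  have hm_ge : ∀ i, |f i| ≤ m := fun i => by
    rw [hm]; exact Finset.le_sup' (fun i => |f i|) (Finset.mem_univ i)
  have hm0 : 0 ≤ m := le_trans (abs_nonneg _) (hm_ge (Classical.arbitrary _))
  have hε : (0:ℝ) < (1 - m) ^ 2 / 2 := by
    have h1m : (0:ℝ) < 1 - m := by linarith
    positivity
  obtain ⟨T, hT0, hT⟩ := loss_eventually_small hL hinf hε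
  set θ : ℝ → Fin d → ℝ := fun t i => ∑ j, a i j * w t j with hθdef
  have hΦθ : ∀ t i, Φ (w t) i = Real.sin (θ t i) := fun t i => rfl
  have hclose : ∀ t ≥ T, ∀ i, |f i - Real.sin (θ t i)| < 1 - m := by
    intro t ht i
    have h1 : (f i - Real.sin (θ t i)) ^ 2 ≤ 2 * loss Φ f (w t) := by
      have := coord_sq_le Φ f (w t) i
      rwa [hΦθ] at this
    have h2 : 2 * loss Φ f (w t) < (1 - m) ^ 2 := by
      have := hT t ht; linarith
    nlinarith [sq_abs (f i - Real.sin (θ t i)), abs_nonneg (f i - Real.sin (θ t i))]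
  have hne1 : ∀ t ≥ T, ∀ i, Real.sin (θ t i) ≠ 1 ∧ Real.sin (θ t i) ≠ -1 := by
    intro t ht i
    constructor
    · intro h1
      have h2 := hclose t ht i
      rw [h1] at h2
      have h3 : 1 - f i ≤ |f i - 1| := by rw [abs_sub_comm]; exact le_abs_self _
      have h4 : f i ≤ m := le_trans (le_abs_self _) (hm_ge i)
      linarith [abs_lt.mp h2]
    · intro h1
      have h2 := hclose t ht i
      rw [h1] at h2
      have h3 : f i + 1 ≤ |f i - (-1)| := by
        have := le_abs_self (f i - (-1)); linarith
      have h4 : -m ≤ f i := by have := neg_abs_le (f i); linarith [hm_ge i]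
      linarith [abs_lt.mp h2]
  have hwc : ContinuousOn w (Ici (0:ℝ)) :=
    fun t ht => (hw t ht).continuousAt.continuousWithinAt
  have hθc : ∀ i, ContinuousOn (fun t => θ t i) (Ici (0:ℝ)) := by
    intro i
    apply continuousOn_finset_sum
    intro j _
    exact continuousOn_const.mul (((EuclideanSpace.proj j).continuous).comp_continuousOn hwc)
  have trap : ∀ i, ∀ t ≥ T, |θ t i - θ T i| < 2 * Real.pi := by
    intro i t ht
    by_contra hcon
    push_neg at hcon
    have hIcc : Icc T t ⊆ Ici (0:ℝ) := fun s hs => le_trans hT0 hs.1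
    rcases abs_cases (θ t i - θ T i) with ⟨heq, _⟩ | ⟨heq, _⟩
    · have hup : θ T i + 2 * Real.pi ≤ θ t i := by rw [heq] at hcon; linarith
      obtain ⟨y, hy, hsy⟩ := exists_sin_eq_one (θ T i)
      have hy' : y ∈ Icc (θ T i) (θ t i) := ⟨hy.1, le_trans hy.2 hup⟩
      obtain ⟨s, hs, hse⟩ := intermediate_value_Icc ht ((hθc i).mono hIcc) hy'
      exact (hne1 s hs.1 i).1 (by rw [show θ s i = y from hse, hsy])
    · have hdown : θ t i ≤ θ T i - 2 * Real.pi := by rw [heq] at hcon; linarith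
      obtain ⟨y, hy, hsy⟩ := exists_sin_eq_neg_one (θ T i)
      have hy' : y ∈ Icc (θ t i) (θ T i) := ⟨le_trans hdown hy.1, hy.2⟩
      obtain ⟨s, hs, hse⟩ := intermediate_value_Icc' ht ((hθc i).mono hIcc) hy'
      exact (hne1 s hs.1 i).2 (by rw [show θ s i = y from hse, hsy])
  set K : Set (Fin d → ℝ) :=
    Set.pi univ (fun i => Icc (θ T i - 2 * Real.pi) (θ T i + 2 * Real.pi)) with hK
  set p : Submodule ℝ (Fin d → ℝ) := LinearMap.range (Matrix.mulVecLin (Matrix.of a)) with hp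
  have hxs : ∀ n : ℕ, θ (T + n) ∈ K ∩ ↑p := by
    intro n
    have hTn : T ≤ T + n := by
      have : (0:ℝ) ≤ (n:ℝ) := n.cast_nonneg
      linarith
    constructor
    · intro i _
      have := trap i (T + n) hTn
      rw [abs_lt] at this
      exact ⟨by linarith [this.1], by linarith [this.2]⟩
    · refine ⟨w (T + n), ?_⟩
      funext i
      simp [Matrix.mulVecLin_apply, Matrix.mulVec, dotProduct, hθdef]
  have hbdd : Bornology.IsBounded (K ∩ ↑p) :=
    ((isCompact_univ_pi fun i => isCompact_Icc).isBounded).subset inter_subset_left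
  obtain ⟨b, hb, φ, hφ, hbx⟩ := tendsto_subseq_of_bounded hbdd hxs
  have hbp : b ∈ p := by
    have h1 : closure (K ∩ ↑p) ⊆ closure (↑p : Set (Fin d → ℝ)) :=
      closure_mono inter_subset_right
    have h2 := (Submodule.closed_of_finiteDimensional p).closure_eq
    rw [h2] at h1
    exact h1 hb
  obtain ⟨v, hv⟩ := hbp
  refine ⟨WithLp.toLp 2 v, ?_⟩
  ext i
  have hΦv : Φ (WithLp.toLp 2 v) i = Real.sin (b i) := by
    rw [hΦdef]
    show Real.sin (∑ j, a i j * v j) = Real.sin (b i)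
    congr 1
    have : (Matrix.mulVecLin (Matrix.of a)) v = b := hv
    rw [← this]
    simp [Matrix.mulVecLin_apply, Matrix.mulVec, dotProduct]
  have htendθ : Tendsto (fun n => θ (T + φ n) i) atTop (𝓝 (b i)) :=
    ((continuous_apply i).continuousAt.tendsto).comp hbx
  have s1 : Tendsto (fun n => Real.sin (θ (T + φ n) i)) atTop (𝓝 (Real.sin (b i))) :=
    (Real.continuous_sin.continuousAt.tendsto).comp htendθ
  have glim : Tendsto (fun n => loss Φ f (w (T + φ n))) atTop (𝓝 0) := by
    rw [Metric.tendsto_atTop]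
    intro ε hε'
    obtain ⟨T', hT'0, hT'⟩ := loss_eventually_small hL hinf hε'
    refine ⟨⌈T'⌉₊, fun n hn => ?_⟩
    have h1 : T' ≤ T + φ n := by
      have : T' ≤ (⌈T'⌉₊ : ℝ) := Nat.le_ceil _
      have h2 : (⌈T'⌉₊:ℝ) ≤ (n:ℝ) := by exact_mod_cast hn
      have h3 : (n:ℝ) ≤ (φ n : ℝ) := by exact_mod_cast hφ.le_apply
      linarith
    rw [Real.dist_eq, sub_zero, abs_of_nonneg (loss_nonneg Φ f _)]
    exact hT' _ h1
  have h4 : Tendsto (fun n => f i - Real.sin (θ (T + φ n) i)) atTop (𝓝 0) := by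
    have hbound : ∀ n : ℕ, ‖f i - Real.sin (θ (T + φ n) i)‖ ≤
        Real.sqrt (2 * loss Φ f (w (T + φ n))) := by
      intro n
      rw [Real.norm_eq_abs, ← Real.sqrt_sq_eq_abs]
      apply Real.sqrt_le_sqrt
      have := coord_sq_le Φ f (w (T + φ n)) i
      rwa [hΦθ] at this
    have h5 : Tendsto (fun n => 2 * loss Φ f (w (T + φ n))) atTop (𝓝 0) := by
      simpa using glim.const_mul 2
    have h6 : Tendsto (fun n => Real.sqrt (2 * loss Φ f (w (T + φ n)))) atTop (𝓝 0) := by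
      have hcomp : Tendsto (fun n => Real.sqrt (2 * loss Φ f (w (T + φ n)))) atTop
          (𝓝 (Real.sqrt 0)) := (Real.continuous_sqrt.continuousAt.tendsto).comp h5
      rwa [Real.sqrt_zero] at hcomp
    exact squeeze_zero_norm hbound h6
  have s2 : Tendsto (fun n => Real.sin (θ (T + φ n) i)) atTop (𝓝 (f i)) := by
    have := (tendsto_const_nhds (α := ℕ) (x := f i) (f := atTop)).sub h4
    simpa using this
  rw [hΦv]
  exact tendsto_nhds_unique s1 s2

/-! ### Measure zero lemmas -/

open Pointwise in
lemma volume_coord_eq {d : ℕ} (i : Fin d) (c : ℝ) :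
    volume {f : EuclideanSpace ℝ (Fin d) | f i = c} = 0 := by
  set S : Submodule ℝ (EuclideanSpace ℝ (Fin d)) := LinearMap.ker ((EuclideanSpace.proj i
    (𝕜 := ℝ)).toLinearMap) with hS
  have hSne : S ≠ ⊤ := by
    intro htop
    have h1 : EuclideanSpace.single i (1:ℝ) ∈ S := htop ▸ Submodule.mem_top
    have h2 : EuclideanSpace.proj i (𝕜 := ℝ) (EuclideanSpace.single i (1:ℝ)) = 0 := h1
    rw [show EuclideanSpace.proj i (𝕜 := ℝ) (EuclideanSpace.single i (1:ℝ)) = (1:ℝ) by simp] at h2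
    simp at h2
  have hS0 : volume (↑S : Set (EuclideanSpace ℝ (Fin d))) = 0 :=
    Measure.addHaar_submodule volume S hSne
  have hset : {f : EuclideanSpace ℝ (Fin d) | f i = c} =
      (EuclideanSpace.single i c) +ᵥ (↑S : Set (EuclideanSpace ℝ (Fin d))) := by
    ext x
    constructor
    · intro hx
      refine ⟨x - EuclideanSpace.single i c, ?_, by
        show EuclideanSpace.single i c +ᵥ (x - EuclideanSpace.single i c) = x
        rw [vadd_eq_add]; abel⟩
      show EuclideanSpace.proj i (𝕜 := ℝ) _ = 0
      rw [map_sub]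
      have hx' : x i = c := hx
      simp [hx']
    · rintro ⟨y, hy, rfl⟩
      have hy0 : y i = 0 := hy
      show (EuclideanSpace.single i c + y) i = c
      have h3 : (EuclideanSpace.single i c + y) i = EuclideanSpace.single i c i + y i := rfl
      rw [h3, hy0, EuclideanSpace.single_apply]
      simp
  rw [hset, measure_vadd]
  exact hS0

/-- The subspace of vectors supported on the first `W` coordinates. -/
def firstCoords (W d : ℕ) : Submodule ℝ (EuclideanSpace ℝ (Fin d)) where
  carrier := {x | ∀ i : Fin d, W ≤ (i : ℕ) → x i = 0}
  add_mem' := by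
    intro x y hx hy i hi
    have : (x + y) i = x i + y i := rfl
    rw [this, hx i hi, hy i hi, add_zero]
  zero_mem' := fun i _ => rfl
  smul_mem' := by
    intro c x hx i hi
    have : (c • x) i = c * x i := rfl
    rw [this, hx i hi, mul_zero]

noncomputable def extZero {W d : ℕ} (_hWd : W < d) (v : EuclideanSpace ℝ (Fin W)) :
    EuclideanSpace ℝ (Fin d) :=
  WithLp.toLp 2 (fun i : Fin d => if h : (i : ℕ) < W then v ⟨i, h⟩ else 0)

noncomputable def restr {W d : ℕ} (hWd : W < d) (x : EuclideanSpace ℝ (Fin d)) :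
    EuclideanSpace ℝ (Fin W) :=
  WithLp.toLp 2 (fun j => x (Fin.castLE hWd.le j))

lemma extZero_mem {W d : ℕ} (hWd : W < d) (v : EuclideanSpace ℝ (Fin W)) :
    extZero hWd v ∈ firstCoords W d := fun _i hi => dif_neg (not_lt.mpr hi)

lemma restr_extZero {W d : ℕ} (hWd : W < d) (v : EuclideanSpace ℝ (Fin W)) :
    restr hWd (extZero hWd v) = v := by
  ext j
  show (if h : ((Fin.castLE hWd.le j : Fin d) : ℕ) < W
      then v ⟨((Fin.castLE hWd.le j : Fin d) : ℕ), h⟩ else 0) = v j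
  rw [dif_pos (by simpa using j.isLt)]
  exact congrArg v (Fin.ext (by simp))

lemma restr_differentiable {W d : ℕ} (hWd : W < d) : Differentiable ℝ (restr hWd) := by
  have h1 : Differentiable ℝ (fun x : EuclideanSpace ℝ (Fin d) =>
      (fun j => x (Fin.castLE hWd.le j) : Fin W → ℝ)) := by
    rw [differentiable_pi]
    exact fun j => (EuclideanSpace.proj (𝕜 := ℝ) (Fin.castLE hWd.le j)).differentiable
  exact ((EuclideanSpace.equiv (Fin W) ℝ).symm.differentiable).comp h1

lemma firstCoords_ne_top {W d : ℕ} (hWd : W < d) : firstCoords W d ≠ ⊤ := by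
  intro htop
  have h1 : EuclideanSpace.single (⟨W, hWd⟩ : Fin d) (1:ℝ) ∈ firstCoords W d :=
    htop ▸ Submodule.mem_top
  have h2 := h1 ⟨W, hWd⟩ (le_refl _)
  rw [EuclideanSpace.single_apply] at h2
  simp at h2

lemma volume_range_phiModel {W d : ℕ} (hWd : W < d) (a : Fin d → Fin W → ℝ) :
    volume (Set.range (PhiModel a)) = 0 := by
  have hS0 : volume (↑(firstCoords W d) : Set (EuclideanSpace ℝ (Fin d))) = 0 :=
    Measure.addHaar_submodule volume _ (firstCoords_ne_top hWd)
  have hΨdiff : Differentiable ℝ (fun x => PhiModel a (restr hWd x)) :=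
    (phiModel_differentiable a).comp (restr_differentiable hWd)
  have hsub : Set.range (PhiModel a) ⊆
      (fun x => PhiModel a (restr hWd x)) '' ↑(firstCoords W d) := by
    rintro _ ⟨v, rfl⟩
    exact ⟨extZero hWd v, extZero_mem hWd v, by
      show PhiModel a (restr hWd (extZero hWd v)) = PhiModel a v
      rw [restr_extZero]⟩
  exact measure_mono_null hsub
    (addHaar_image_eq_zero_of_differentiableOn_of_addHaar_eq_zero volume
      hΨdiff.differentiableOn hS0)

/-- For the sine model `Φ_i(w) = sin(Σ_j a_{ij} w_j)` with `W < d` and arbitrary real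
coefficients, the set of gradient-flow learnable targets has Lebesgue measure zero. -/
theorem sin_model_learnable_measure_zero (W d : ℕ) (hW : 1 ≤ W) (hWd : W < d)
    (a : Fin d → Fin W → ℝ) :
    MeasureTheory.volume
      (learnableSet (fun w : EuclideanSpace ℝ (Fin W) =>
        (WithLp.toLp 2 (fun i => Real.sin (∑ j, a i j * w j)) : EuclideanSpace ℝ (Fin d)))) = 0 := by
  have hd : 0 < d := lt_of_le_of_lt (Nat.zero_le W) hWd
  have hkey : learnableSet (fun w : EuclideanSpace ℝ (Fin W) =>
        (WithLp.toLp 2 (fun i => Real.sin (∑ j, a i j * w j)) : EuclideanSpace ℝ (Fin d))) ⊆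
      Set.range (PhiModel a) ∪
        ⋃ i : Fin d, ({f : EuclideanSpace ℝ (Fin d) | f i = 1} ∪ {f | f i = -1}) := by
    intro f hf
    obtain ⟨w, hw0, hw, hinf⟩ := hf
    have hw' : ∀ t ≥ (0:ℝ), HasDerivAt w (-(gradient (loss (PhiModel a) f) (w t))) t := hw
    have hinf' : (⨅ t : Set.Ici (0:ℝ), loss (PhiModel a) f (w t)) = 0 := hinf
    by_cases hlt : ∀ i, |f i| < 1
    · exact Or.inl (trapped hd a hw' hinf' hlt)
    · right
      push_neg at hlt
      obtain ⟨i, hi⟩ := hlt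
      have hle : |f i| ≤ 1 := abs_coord_le_one a hw' hinf' i
      have habs : |f i| = 1 := le_antisymm hle hi
      rcases (abs_eq (by norm_num : (0:ℝ) ≤ 1)).mp habs with h | h
      · exact mem_iUnion.mpr ⟨i, Or.inl h⟩
      · exact mem_iUnion.mpr ⟨i, Or.inr h⟩
  apply measure_mono_null hkey
  apply measure_union_null (volume_range_phiModel hWd a)
  apply measure_iUnion_null
  intro i
  exact measure_union_null (volume_coord_eq i 1) (volume_coord_eq i (-1))
end
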